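/- arXiv:1509.03209 — 2 statements merged into one kernel-verified Lean document; each statement's English description precedes it below -/
import Mathlib

section
/- On the free product G = G₁ * ⋯ * G_r, for each i the generating function Mᵢ*(z) of self-avoiding walks from the root that visit Vᵢ \ {oᵢ} satisfies Mᵢ*(z) = Mᵢ(z)·(1 + Σ_{j≠i} Mⱼ*(z)) as an identity of formal power series. -/
open Filter Topology

/-- A valid word in the free product: letters are non-root vertices of the factors,
no two consecutive letters from the same factor. -/
def ValidWord {r : ℕ} {V : Fin r → Type} (o : ∀ i, V i) (l : List (Σ i, V i)) : Prop :=
  (∀ x ∈ l, x.2 ≠ o x.1) ∧ l.Chain' (fun a b => a.1 ≠ b.1)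

/-- The vertex set of the free product of rooted graphs: the set of valid words. -/
def FPV {r : ℕ} (V : Fin r → Type) (o : ∀ i, V i) : Type :=
  {l : List (Σ i, V i) // ValidWord o l}

/-- The edge relation of the free product on raw words: `w x` is adjacent to `w y`
whenever `x, y` belong to the same factor (where `x` or `y` may be the root, i.e.
the empty extension) and are adjacent there. -/
def RawAdj {r : ℕ} {V : Fin r → Type} (G : ∀ i, SimpleGraph (V i)) (o : ∀ i, V i) :
    List (Σ i, V i) → List (Σ i, V i) → Prop := fun a b =>
  (∃ (w : List (Σ i, V i)) (i : Fin r) (x y : V i),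
      (G i).Adj x y ∧ a = w ++ [⟨i, x⟩] ∧ b = w ++ [⟨i, y⟩])
  ∨ (∃ (i : Fin r) (y : V i), (G i).Adj (o i) y ∧ b = a ++ [⟨i, y⟩])
  ∨ (∃ (i : Fin r) (y : V i), (G i).Adj (o i) y ∧ a = b ++ [⟨i, y⟩])

/-- The free product `G₁ * ⋯ * G_r` of rooted graphs. -/
def freeProd {r : ℕ} {V : Fin r → Type} (G : ∀ i, SimpleGraph (V i)) (o : ∀ i, V i) :
    SimpleGraph (FPV V o) :=
  SimpleGraph.fromRel (fun a b => RawAdj G o a.1 b.1)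

/-- The root (empty word) of the free product. -/
def fpRoot {r : ℕ} (V : Fin r → Type) (o : ∀ i, V i) : FPV V o :=
  ⟨[], fun x hx => absurd hx List.not_mem_nil, List.IsChain.nil⟩

/-- `sawCount G v n` is the number of self-avoiding walks of length `n` in `G` starting at `v`,
i.e. paths `[v₀, …, vₙ]` with `v₀ = v`, consecutive vertices adjacent, and no repeated vertex. -/
noncomputable def sawCount {V : Type*} (G : SimpleGraph V) (v : V) (n : ℕ) : ℕ :=
  Set.ncard {l : List V | l.length = n + 1 ∧ l.head? = some v ∧ l.Chain' G.Adj ∧ l.Nodup}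

/-- A graph is quasi-transitive if its automorphism group acts with finitely many orbits. -/
def QuasiTransitive {V : Type*} (G : SimpleGraph V) : Prop :=
  ∃ s : Finset V, ∀ v : V, ∃ φ : G ≃g G, φ v ∈ s

/-- A graph is locally finite if every vertex has finitely many neighbours. -/
def LocFinite {V : Type*} (G : SimpleGraph V) : Prop := ∀ v, (G.neighborSet v).Finite

/-- `sawCountVia G o i n` counts self-avoiding walks of length `n` in the free product
starting at the root whose first step enters the copy of the `i`-th factor
(equivalently, which visit `Vᵢ \ {oᵢ}`). -/
noncomputable def sawCountVia {r : ℕ} {V : Fin r → Type} (G : ∀ i, SimpleGraph (V i))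
    (o : ∀ i, V i) (i : Fin r) (n : ℕ) : ℕ :=
  Set.ncard {l : List (FPV V o) |
    l.length = n + 1 ∧ l.head? = some (fpRoot V o) ∧ l.Chain' (freeProd G o).Adj ∧ l.Nodup ∧
    ∃ (v : FPV V o) (x : V i), l[1]? = some v ∧ v.1 = [⟨i, x⟩]}

namespace FPaux

variable {r : ℕ} {V : Fin r → Type} (G : ∀ i, SimpleGraph (V i)) (o : ∀ i, V i)

lemma rawAdj_symm {a b : List (Σ i, V i)} (h : RawAdj G o a b) : RawAdj G o b a := by
  rcases h with ⟨w, i, x, y, hxy, ha, hb⟩ | ⟨i, y, hy, hb⟩ | ⟨i, y, hy, ha⟩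
  · exact Or.inl ⟨w, i, y, x, hxy.symm, hb, ha⟩
  · exact Or.inr (Or.inr ⟨i, y, hy, hb⟩)
  · exact Or.inr (Or.inl ⟨i, y, hy, ha⟩)

lemma sigma_mk_inj {i : Fin r} {x y : V i} (h : (⟨i, x⟩ : Σ i, V i) = ⟨i, y⟩) : x = y := by
  have := (Sigma.mk.inj_iff.mp h).2
  exact eq_of_heq this

lemma rawAdj_ne {a b : List (Σ i, V i)} (h : RawAdj G o a b) : a ≠ b := by
  rcases h with ⟨w, i, x, y, hxy, ha, hb⟩ | ⟨i, y, hy, hb⟩ | ⟨i, y, hy, ha⟩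
  · subst ha; subst hb
    intro hc
    have h1 : ([⟨i, x⟩] : List (Σ i, V i)) = [⟨i, y⟩] := List.append_cancel_left hc
    exact hxy.ne (sigma_mk_inj (by injection h1))
  · subst hb; intro hc
    have := congrArg List.length hc; simp at this
  · subst ha; intro hc
    have := congrArg List.length hc; simp at this

lemma fp_adj_iff (a b : FPV V o) : (freeProd G o).Adj a b ↔ RawAdj G o a.1 b.1 := by
  constructor
  · intro h
    rcases (SimpleGraph.fromRel_adj _ a b).mp h with ⟨-, h | h⟩
    · exact h
    · exact rawAdj_symm G o h
  · intro h
    refine (SimpleGraph.fromRel_adj _ a b).mpr ⟨?_, Or.inl h⟩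
    intro hc
    exact rawAdj_ne G o h (by rw [hc])


variable {r : ℕ} {V : Fin r → Type} (G : ∀ i, SimpleGraph (V i)) (o : ∀ i, V i)

/-- Adjacency where length grows forces an append step. -/
lemma rawAdj_grow {a b : List (Σ i, V i)} (h : RawAdj G o a b) (hlen : a.length < b.length) :
    ∃ c : Σ i, V i, b = a ++ [c] ∧ (G c.1).Adj (o c.1) c.2 := by
  rcases h with ⟨w, i, x, y, hxy, ha, hb⟩ | ⟨i, y, hy, hb⟩ | ⟨i, y, hy, ha⟩
  · subst ha; subst hb; simp at hlen
  · exact ⟨⟨i, y⟩, hb, hy⟩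
  · subst ha; simp at hlen

lemma rawAdj_of_root {u : List (Σ i, V i)} (h : RawAdj G o [] u) :
    ∃ c : Σ i, V i, u = [c] ∧ (G c.1).Adj (o c.1) c.2 := by
  rcases h with ⟨w, i, x, y, hxy, ha, hb⟩ | ⟨i, y, hy, hb⟩ | ⟨i, y, hy, ha⟩
  · exact absurd ha.symm (by simp)
  · exact ⟨⟨i, y⟩, by simpa using hb, hy⟩
  · exact absurd ha.symm (by simp)

/-- Adjacency between two single-letter words stays in one factor. -/
lemma rawAdj_short {c d : Σ i, V i} (h : RawAdj G o [c] [d]) :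
    ∃ (i : Fin r) (x y : V i), c = ⟨i, x⟩ ∧ d = ⟨i, y⟩ ∧ (G i).Adj x y := by
  rcases h with ⟨w, i, x, y, hxy, ha, hb⟩ | ⟨i, y, hy, hb⟩ | ⟨i, y, hy, ha⟩
  · have hw : w = [] := by
      have := congrArg List.length ha; simpa using this
    subst hw
    simp at ha hb
    exact ⟨i, x, y, ha, hb, hxy⟩
  · have := congrArg List.length hb; simp at this
  · have := congrArg List.length ha; simp at this

lemma rawAdj_cons (d : Σ i, V i) {u v : List (Σ i, V i)} (h : RawAdj G o u v) :
    RawAdj G o (d :: u) (d :: v) := by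
  rcases h with ⟨w, i, x, y, hxy, ha, hb⟩ | ⟨i, y, hy, hb⟩ | ⟨i, y, hy, ha⟩
  · exact Or.inl ⟨d :: w, i, x, y, hxy, by simp [ha], by simp [hb]⟩
  · exact Or.inr (Or.inl ⟨i, y, hy, by simp [hb]⟩)
  · exact Or.inr (Or.inr ⟨i, y, hy, by simp [ha]⟩)

lemma rawAdj_cons_cancel {d : Σ i, V i} {u v : List (Σ i, V i)} (hu : u ≠ [])
    (h : RawAdj G o (d :: u) (d :: v)) : RawAdj G o u v := by
  rcases h with ⟨w, i, x, y, hxy, ha, hb⟩ | ⟨i, y, hy, hb⟩ | ⟨i, y, hy, ha⟩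
  · cases w with
    | nil =>
      simp at ha
      exact absurd ha.2 hu
    | cons e w' =>
      simp only [List.cons_append, List.cons.injEq] at ha hb
      exact Or.inl ⟨w', i, x, y, hxy, ha.2, hb.2⟩
  · simp only [List.cons_append, List.cons.injEq] at hb
    exact Or.inr (Or.inl ⟨i, y, hy, hb.2⟩)
  · simp only [List.cons_append, List.cons.injEq] at ha
    exact Or.inr (Or.inr ⟨i, y, hy, ha.2⟩)

/-- `Deep w₀ j u` : `u` lies strictly inside the branch above `w₀` entered through factor `j`. -/
def Deep (w₀ : List (Σ i, V i)) (j : Fin r) (u : List (Σ i, V i)) : Prop :=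
  ∃ (c : Σ i, V i) (t : List (Σ i, V i)), c.1 = j ∧ u = w₀ ++ c :: t

lemma deep_step {w₀ : List (Σ i, V i)} {j : Fin r} {u v : List (Σ i, V i)}
    (hd : Deep w₀ j u) (h : RawAdj G o u v) : v = w₀ ∨ Deep w₀ j v := by
  obtain ⟨c, t, hcj, hu⟩ := hd
  rcases h with ⟨w, i, x, y, hxy, ha, hb⟩ | ⟨i, y, hy, hb⟩ | ⟨i, y, hy, ha⟩
  · -- last-letter change
    rcases List.eq_nil_or_concat t with rfl | ⟨t', e, rfl⟩
    · -- u = w₀ ++ [c] = w ++ [⟨i,x⟩]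
      rw [hu] at ha
      have hlen : w₀.length = w.length := by
        have := congrArg List.length ha; simp at this; omega
      obtain ⟨hw, hc⟩ := List.append_inj ha hlen
      have hc' : c = ⟨i, x⟩ := by injection hc
      refine Or.inr ⟨⟨i, y⟩, [], ?_, by rw [hb, ← hw]⟩
      rw [← hcj, hc']
    · rw [hu] at ha
      have ha' : (w₀ ++ c :: t') ++ [e] = w ++ [⟨i, x⟩] := by
        rw [← ha]; simp
      have hlen : (w₀ ++ c :: t').length = w.length := by
        have := congrArg List.length ha'; simp at this; simp; omega
      obtain ⟨hw, -⟩ := List.append_inj ha' hlen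
      refine Or.inr ⟨c, t' ++ [⟨i, y⟩], hcj, ?_⟩
      rw [hb, ← hw]; simp
  · exact Or.inr ⟨c, t ++ [⟨i, y⟩], hcj, by rw [hb, hu]; simp⟩
  · rcases List.eq_nil_or_concat t with rfl | ⟨t', e, rfl⟩
    · left
      rw [hu] at ha
      have hlen : v.length = w₀.length := by
        have := congrArg List.length ha; simp at this; omega
      exact (List.append_inj ha.symm hlen).1
    · right
      rw [hu] at ha
      have ha' : v ++ [⟨i, y⟩] = (w₀ ++ c :: t') ++ [e] := by rw [← ha]; simp
      have hlen : v.length = (w₀ ++ c :: t').length := by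
        have := congrArg List.length ha'; simp at this; simp; omega
      obtain ⟨hv, -⟩ := List.append_inj ha' hlen
      exact ⟨c, t', hcj, hv⟩

/-- Once a self-avoiding chain is strictly inside the branch above `w₀`, it stays there. -/
lemma cut (w₀ : List (Σ i, V i)) (j : Fin r) :
    ∀ (l : List (FPV V o)) (u : FPV V o), List.Chain' (freeProd G o).Adj (u :: l) →
      (∀ v ∈ l, v.1 ≠ w₀) → Deep w₀ j u.1 → ∀ v ∈ u :: l, Deep w₀ j v.1 := by
  intro l
  induction l with
  | nil => intro u _ _ hu v hv; simp at hv; subst hv; exact hu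
  | cons b t ih =>
    intro u hch hne hu v hv
    have hadj : RawAdj G o u.1 b.1 :=
      (fp_adj_iff G o u b).mp (List.isChain_cons_cons.mp hch).1
    have hb : Deep w₀ j b.1 := by
      rcases deep_step G o hu hadj with h | h
      · exact absurd h (hne b (by simp))
      · exact h
    rcases List.mem_cons.mp hv with rfl | hv'
    · exact hu
    · exact ih b (List.isChain_cons_cons.mp hch).2 (fun x hx => hne x (by simp [hx])) hb v hv'

lemma validWord_tail {l : List (Σ i, V i)} (h : ValidWord o l) : ValidWord o l.tail :=
  ⟨fun x hx => h.1 x (List.mem_of_mem_tail hx), h.2.tail⟩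

/-- Delete the first letter of a word. -/
def devert (u : FPV V o) : FPV V o := ⟨u.1.tail, validWord_tail o u.2⟩

open Classical in
noncomputable def vert (i : Fin r) (x : V i) : FPV V o :=
  if h : x = o i then fpRoot V o else
    ⟨[⟨i, x⟩], by
      refine ⟨?_, by simp [List.Chain']⟩
      intro c hc
      simp only [List.mem_singleton] at hc
      subst hc; exact h⟩

lemma vert_val {i : Fin r} {x : V i} (h : x ≠ o i) : (vert o i x).1 = [⟨i, x⟩] := by
  exact congrArg Subtype.val (dif_neg h : vert o i x = _)

open Classical in
noncomputable def prep (c : Σ i, V i) (u : FPV V o) : FPV V o :=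
  if h : c.2 ≠ o c.1 ∧ ∀ d ∈ u.1.head?, d.1 ≠ c.1 then
    ⟨c :: u.1, by
      constructor
      · intro x hx
        rcases List.mem_cons.mp hx with rfl | hx
        · exact h.1
        · exact u.2.1 x hx
      · rw [List.Chain', List.isChain_cons]
        exact ⟨fun d hd => (h.2 d hd).symm, u.2.2⟩⟩
  else fpRoot V o

lemma prep_val {c : Σ i, V i} {u : FPV V o} (h1 : c.2 ≠ o c.1)
    (h2 : ∀ d ∈ u.1.head?, d.1 ≠ c.1) : (prep o c u).1 = c :: u.1 := by
  exact congrArg Subtype.val (dif_pos (And.intro h1 h2) : prep o c u = _)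

open Classical in
noncomputable def lx (i : Fin r) (u : FPV V o) : V i :=
  if h : ∃ x : V i, u.1 = [⟨i, x⟩] then h.choose else o i

lemma lx_spec {i : Fin r} {x : V i} {u : FPV V o} (h : u.1 = [⟨i, x⟩]) : lx o i u = x := by
  have hex : ∃ y : V i, u.1 = [⟨i, y⟩] := ⟨x, h⟩
  rw [lx, dif_pos hex]
  have h3 := h.symm.trans hex.choose_spec
  exact (sigma_mk_inj (by injection h3)).symm

lemma lx_vert {i : Fin r} {x : V i} (h : x ≠ o i) : lx o i (vert o i x) = x :=
  lx_spec o (vert_val o h)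

lemma finite_walkSet {W : Type*} (H : SimpleGraph W) (hlf : ∀ v, (H.neighborSet v).Finite) :
    ∀ (n : ℕ) (v : W), {l : List W | l.length = n + 1 ∧ l.head? = some v ∧ l.Chain' H.Adj}.Finite := by
  intro n
  induction n with
  | zero =>
    intro v
    apply Set.Finite.subset (Set.finite_singleton [v])
    rintro l ⟨h1, h2, -⟩
    cases l with
    | nil => simp at h1
    | cons a t =>
      cases t with
      | nil => simp at h2 ⊢; exact h2
      | cons b t' => simp at h1
  | succ n ih =>
    intro v
    apply Set.Finite.subset ((hlf v).biUnion (fun w _ => (ih w).image (List.cons v)))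
    rintro l ⟨h1, h2, h3⟩
    cases l with
    | nil => simp at h1
    | cons a t =>
      simp only [List.head?_cons, Option.some.injEq] at h2
      subst h2
      cases t with
      | nil => simp at h1
      | cons b t' =>
        exact Set.mem_biUnion (List.isChain_cons_cons.mp h3).1
          ⟨b :: t', ⟨by simpa using h1, rfl, (List.isChain_cons_cons.mp h3).2⟩, rfl⟩

lemma freeProd_locFinite (hlf : ∀ i, LocFinite (G i)) (v : FPV V o) :
    ((freeProd G o).neighborSet v).Finite := by
  classical
  set C : Set (Σ i, V i) :=
    (⋃ i : Fin r, Sigma.mk i '' (G i).neighborSet (o i)) ∪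
    (⋃ d ∈ {d : Σ i, V i | d ∈ v.1}, Sigma.mk d.1 '' (G d.1).neighborSet d.2) with hC
  have hCfin : C.Finite := by
    apply Set.Finite.union
    · exact Set.finite_iUnion fun i => ((hlf i) (o i)).image _
    · exact Set.Finite.biUnion (v.1.finite_toSet) fun d _ => ((hlf d.1) d.2).image _
  set S : Set (List (Σ i, V i)) :=
    {v.1.dropLast} ∪ ((fun c => v.1.dropLast ++ [c]) '' C ∪ (fun c => v.1 ++ [c]) '' C) with hS
  have hSfin : S.Finite :=
    (Set.finite_singleton _).union ((hCfin.image _).union (hCfin.image _))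
  refine Set.Finite.subset (hSfin.preimage (Set.injOn_of_injective Subtype.val_injective)) ?_
  intro b hb
  have hadj : RawAdj G o v.1 b.1 := (fp_adj_iff G o v b).mp hb
  simp only [Set.mem_preimage]
  rcases hadj with ⟨w, i, x, y, hxy, ha', hb'⟩ | ⟨i, y, hy, hb'⟩ | ⟨i, y, hy, ha'⟩
  · have hw : v.1.dropLast = w := by rw [ha']; simp
    refine Or.inr (Or.inl ⟨⟨i, y⟩, ?_, show (v.1).dropLast ++ [(⟨i, y⟩ : Σ i, V i)] = b.1 by
      rw [hw]; exact hb'.symm⟩)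
    refine Or.inr (Set.mem_biUnion (show (⟨i, x⟩ : Σ i, V i) ∈ {d : Σ i, V i | d ∈ v.1} by
      simp [ha']) ?_)
    exact ⟨y, hxy, rfl⟩
  · exact Or.inr (Or.inr ⟨⟨i, y⟩, Or.inl (Set.mem_iUnion.mpr ⟨i, ⟨y, hy, rfl⟩⟩), hb'.symm⟩)
  · refine Or.inl (show b.1 = v.1.dropLast by rw [ha']; simp)

/-- The set of self-avoiding walks of length `n` from `v`. -/
def Wsaw {W : Type*} (H : SimpleGraph W) (v : W) (n : ℕ) : Set (List W) :=
  {l | l.length = n + 1 ∧ l.head? = some v ∧ l.Chain' H.Adj ∧ l.Nodup}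

/-- The set of self-avoiding walks of length `n` from the root entering through factor `j`. -/
def setA (j : Fin r) (n : ℕ) : Set (List (FPV V o)) :=
  {l | l.length = n + 1 ∧ l.head? = some (fpRoot V o) ∧ l.Chain' (freeProd G o).Adj ∧ l.Nodup ∧
    ∃ (v : FPV V o) (x : V j), l[1]? = some v ∧ v.1 = [⟨j, x⟩]}

lemma sawCount_eq_ncard {W : Type*} (H : SimpleGraph W) (w : W) (n : ℕ) :
    sawCount H w n = (Wsaw H w n).ncard := rfl

lemma sawCountVia_eq_ncard (j : Fin r) (n : ℕ) :
    sawCountVia G o j n = (setA G o j n).ncard := rfl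

lemma Wsaw_finite {W : Type*} {H : SimpleGraph W} (hlf : ∀ w, (H.neighborSet w).Finite)
    (w : W) (n : ℕ) : (Wsaw H w n).Finite :=
  (finite_walkSet H hlf n w).subset fun l hl => ⟨hl.1, hl.2.1, hl.2.2.1⟩

lemma setA_finite (hlf : ∀ i, LocFinite (G i)) (j : Fin r) (n : ℕ) :
    (setA G o j n).Finite :=
  (finite_walkSet (freeProd G o) (freeProd_locFinite G o hlf) n (fpRoot V o)).subset
    fun l hl => ⟨hl.1, hl.2.1, hl.2.2.1⟩

lemma setA_zero (j : Fin r) : setA G o j 0 = ∅ := by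
  ext l
  simp only [setA, Set.mem_setOf_eq, Set.mem_empty_iff_false, iff_false, not_and]
  intro h1 _ _ _
  rintro ⟨v, x, hv, -⟩
  rw [List.getElem?_eq_none (by omega)] at hv
  exact nomatch hv

lemma head_decomp {α : Type*} {l : List α} {v : α} (h : l.head? = some v) : l = v :: l.tail := by
  cases l with
  | nil => simp at h
  | cons a t => simp only [List.head?_cons, Option.some.injEq] at h; rw [h]; rfl

lemma eq_root_of_val_nil {u : FPV V o} (h : u.1 = []) : u = fpRoot V o :=
  Subtype.ext (by rw [h]; rfl)

lemma setA_struct {j : Fin r} {n : ℕ} {l : List (FPV V o)} (hl : l ∈ setA G o j n) :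
    ∀ v ∈ l.tail, ∃ (c : Σ i, V i) (t : List (Σ i, V i)), c.1 = j ∧ v.1 = c :: t := by
  obtain ⟨hlen, hhd, hch, hnd, u₁, x, hu1, hu1v⟩ := hl
  have hl' : l = fpRoot V o :: l.tail := head_decomp hhd
  cases htl : l.tail with
  | nil => intro v hv; simp [htl] at hv
  | cons u t =>
    have hu : u = u₁ := by
      rw [hl', htl] at hu1; simpa using hu1
    subst hu
    have hch' : (u :: t).Chain' (freeProd G o).Adj := by
      rw [hl', htl] at hch; exact hch.tail
    have hnd' : fpRoot V o ∉ u :: t := by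
      rw [hl', htl] at hnd; exact (List.nodup_cons.mp hnd).1
    have hne : ∀ v ∈ t, v.1 ≠ ([] : List (Σ i, V i)) := by
      intro v hv hc
      exact hnd' (by rw [← eq_root_of_val_nil o hc]; simp [hv])
    have hdeep : Deep ([] : List (Σ i, V i)) j u.1 := ⟨⟨j, x⟩, [], rfl, by simp [hu1v]⟩
    intro v hv
    obtain ⟨c, t', hc, hv'⟩ := cut G o [] j t u hch' hne hdeep v hv
    exact ⟨c, t', hc, by simpa using hv'⟩

lemma adj_of_sigma_eqs {i i' : Fin r} {x y : V i} {x' y' : V i'}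
    (hc : (⟨i, x⟩ : Σ i, V i) = ⟨i', x'⟩) (hd : (⟨i, y⟩ : Σ i, V i) = ⟨i', y'⟩)
    (h : (G i').Adj x' y') : (G i).Adj x y := by
  obtain ⟨h1, -⟩ := Sigma.mk.inj_iff.mp hc
  subst h1
  rw [sigma_mk_inj hc, sigma_mk_inj hd]
  exact h

lemma adj_root_letter {u : FPV V o} {i : Fin r} {x : V i}
    (h : (freeProd G o).Adj (fpRoot V o) u) (hx : u.1 = [⟨i, x⟩]) : (G i).Adj (o i) x := by
  have h' : RawAdj G o [] u.1 := (fp_adj_iff G o _ u).mp h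
  obtain ⟨c, hc, hadj⟩ := rawAdj_of_root G o h'
  rw [hx] at hc
  have hcx : (⟨i, x⟩ : Σ i, V i) = c := by injection hc
  subst hcx
  exact hadj

lemma chain_lx (i : Fin r) : ∀ (s : List (FPV V o)), s.Chain' (freeProd G o).Adj →
    (∀ v ∈ s, ∃ x : V i, v.1 = [⟨i, x⟩]) → (s.map (lx o i)).Chain' (G i).Adj := by
  intro s
  induction s with
  | nil => intro _ _; simp [List.Chain']
  | cons a t ih =>
    intro hch hall
    cases t with
    | nil => simp [List.Chain']
    | cons b t' =>
      obtain ⟨x, hx⟩ := hall a (by simp)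
      obtain ⟨y, hy⟩ := hall b (by simp)
      have hadj := (fp_adj_iff G o a b).mp (List.isChain_cons_cons.mp hch).1
      rw [hx, hy] at hadj
      obtain ⟨i', x', y', hc, hd, hxy⟩ := rawAdj_short G o hadj
      refine List.isChain_cons_cons.mpr ⟨?_, ih (List.isChain_cons_cons.mp hch).2
        (fun v hv => hall v (by simp [hv]))⟩
      rw [lx_spec o hx, lx_spec o hy]
      exact adj_of_sigma_eqs G hc hd hxy

lemma chain_vert (i : Fin r) : ∀ (s : List (V i)), s.Chain' (G i).Adj →
    (∀ x ∈ s, x ≠ o i) → (s.map (vert o i)).Chain' (freeProd G o).Adj := by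
  intro s
  induction s with
  | nil => intro _ _; simp [List.Chain']
  | cons a t ih =>
    intro hch hall
    cases t with
    | nil => simp [List.Chain']
    | cons b t' =>
      refine List.isChain_cons_cons.mpr ⟨?_, ih (List.isChain_cons_cons.mp hch).2
        (fun v hv => hall v (by simp [hv]))⟩
      refine (fp_adj_iff G o _ _).mpr (Or.inl ⟨[], i, a, b, (List.isChain_cons_cons.mp hch).1, ?_, ?_⟩)
      · rw [vert_val o (hall a (by simp))]; rfl
      · rw [vert_val o (hall b (by simp))]; rfl

lemma chain_devert (d : Σ i, V i) : ∀ (s : List (FPV V o)), s.Chain' (freeProd G o).Adj →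
    (∀ v ∈ s, ∃ (c : Σ i, V i) (t : List (Σ i, V i)), v.1 = d :: c :: t) →
    (s.map (devert o)).Chain' (freeProd G o).Adj := by
  intro s
  induction s with
  | nil => intro _ _; simp [List.Chain']
  | cons a t ih =>
    intro hch hall
    cases t with
    | nil => simp [List.Chain']
    | cons b t' =>
      obtain ⟨c, ta, ha⟩ := hall a (by simp)
      obtain ⟨c', tb, hb⟩ := hall b (by simp)
      refine List.isChain_cons_cons.mpr ⟨?_, ih (List.isChain_cons_cons.mp hch).2
        (fun v hv => hall v (by simp [hv]))⟩
      have hadj := (fp_adj_iff G o a b).mp (List.isChain_cons_cons.mp hch).1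
      rw [ha, hb] at hadj
      refine (fp_adj_iff G o _ _).mpr ?_
      have : RawAdj G o (c :: ta) (c' :: tb) :=
        rawAdj_cons_cancel G o (by simp) hadj
      show RawAdj G o (devert o a).1 (devert o b).1
      rw [devert, devert]
      simp only [ha, hb, List.tail_cons]
      exact this

lemma chain_prep (d : Σ i, V i) (hd2 : d.2 ≠ o d.1) :
    ∀ (s : List (FPV V o)), s.Chain' (freeProd G o).Adj →
    (∀ v ∈ s, ∀ e ∈ v.1.head?, e.1 ≠ d.1) →
    ((s.map (prep o d)).Chain' (freeProd G o).Adj) := by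
  intro s
  induction s with
  | nil => intro _ _; simp [List.Chain']
  | cons a t ih =>
    intro hch hall
    cases t with
    | nil => simp [List.Chain']
    | cons b t' =>
      refine List.isChain_cons_cons.mpr ⟨?_, ih (List.isChain_cons_cons.mp hch).2
        (fun v hv => hall v (by simp [hv]))⟩
      have hadj := (fp_adj_iff G o a b).mp (List.isChain_cons_cons.mp hch).1
      refine (fp_adj_iff G o _ _).mpr ?_
      show RawAdj G o (prep o d a).1 (prep o d b).1
      rw [prep_val o hd2 (hall a (by simp)), prep_val o hd2 (hall b (by simp))]
      exact rawAdj_cons G o d hadj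

/-- words of length at most 1 -/
def shortF (u : FPV V o) : Bool := u.1.length ≤ 1

lemma short_run (i : Fin r) : ∀ (s : List (FPV V o)) (u : FPV V o),
    (u :: s).Chain' (freeProd G o).Adj →
    (∀ v ∈ u :: s, v.1.length = 1) →
    (∃ x : V i, u.1 = [⟨i, x⟩]) →
    ∀ v ∈ u :: s, ∃ x : V i, v.1 = [⟨i, x⟩] := by
  intro s
  induction s with
  | nil =>
    intro u _ _ hu v hv
    simp only [List.mem_singleton] at hv; subst hv; exact hu
  | cons b t ih =>
    intro u hch hlen hu v hv
    obtain ⟨x, hx⟩ := hu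
    obtain ⟨c, hc⟩ := List.length_eq_one_iff.mp (hlen b (by simp))
    have hadj := (fp_adj_iff G o u b).mp (List.isChain_cons_cons.mp hch).1
    rw [hx, hc] at hadj
    obtain ⟨i', x', y', he, hf, -⟩ := rawAdj_short G o hadj
    have hb : ∃ y : V i, b.1 = [⟨i, y⟩] := by
      obtain ⟨h1, -⟩ := Sigma.mk.inj_iff.mp he
      subst h1
      exact ⟨y', by rw [hc, hf]⟩
    rcases List.mem_cons.mp hv with rfl | hv'
    · exact ⟨x, hx⟩
    · exact ih b (List.isChain_cons_cons.mp hch).2 (fun w hw => hlen w (by simp [hw])) hb v hv'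

lemma shortF_iff {u : FPV V o} : shortF o u = true ↔ u.1.length ≤ 1 := by
  simp [shortF]

lemma shortF_false {u : FPV V o} (h : 1 < u.1.length) : shortF o u = false := by
  simp only [shortF, decide_eq_false_iff_not]
  omega

lemma dropWhile_head_false {α : Type*} (p : α → Bool) :
    ∀ (l : List α) {u : α} {t : List α}, l.dropWhile p = u :: t → p u = false := by
  intro l
  induction l with
  | nil => intro u t h; simp at h
  | cons a l' ih =>
    intro u t h
    by_cases hp : p a
    · rw [List.dropWhile_cons_of_pos hp] at h; exact ih h
    · rw [List.dropWhile_cons_of_neg hp] at h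
      obtain ⟨rfl, -⟩ := List.cons.injEq .. ▸ h
      exact Bool.not_eq_true _ ▸ hp

lemma setA_parts {i : Fin r} {n : ℕ} {l : List (FPV V o)} (hl : l ∈ setA G o i n) :
    l = fpRoot V o :: l.tail ∧ l.tail.Nodup ∧ fpRoot V o ∉ l.tail ∧
      l.tail.Chain' (freeProd G o).Adj ∧ l.tail.length = n := by
  obtain ⟨hlen, hhd, hch, hnd, -⟩ := hl
  have hl' : l = fpRoot V o :: l.tail := head_decomp hhd
  rw [hl'] at hnd hch
  exact ⟨hl', (List.nodup_cons.mp hnd).2, (List.nodup_cons.mp hnd).1, hch.tail,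
    by rw [List.length_tail, hlen]; omega⟩

lemma ts_facts {i : Fin r} {n : ℕ} {l : List (FPV V o)} (hl : l ∈ setA G o i n) (hn : 1 ≤ n) :
    (l.tail.takeWhile (shortF o)) ≠ [] ∧
      (∀ v ∈ l.tail.takeWhile (shortF o), ∃ x : V i, x ≠ o i ∧ v.1 = [⟨i, x⟩]) := by
  obtain ⟨hl', hndt, hroot, hcht, hlent⟩ := setA_parts G o hl
  obtain ⟨-, -, -, -, u₁, x₀, hu1, hu1v⟩ := hl
  obtain ⟨u, t, htl⟩ : ∃ u t, l.tail = u :: t := by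
    cases h : l.tail with
    | nil => exfalso; rw [h] at hlent; simp at hlent; omega
    | cons a b => exact ⟨a, b, rfl⟩
  have hu : u = u₁ := by rw [hl', htl] at hu1; simpa using hu1
  subst hu
  rw [htl] at hroot hcht ⊢
  have hshort : shortF o u = true := (shortF_iff o).mpr (by rw [hu1v]; simp)
  rw [List.takeWhile_cons_of_pos hshort]
  refine ⟨by simp, ?_⟩
  have hlen1 : ∀ v ∈ u :: t.takeWhile (shortF o), v.1.length = 1 := by
    intro v hv
    have hv2 : v ∈ (u :: t).takeWhile (shortF o) := by
      rw [List.takeWhile_cons_of_pos hshort]; exact hv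
    have h1 : v.1.length ≤ 1 := (shortF_iff o).mp (List.mem_takeWhile_imp hv2)
    have h2 : v.1 ≠ [] := by
      intro hc
      exact hroot (by
        rw [← eq_root_of_val_nil o hc]
        exact ((List.takeWhile_prefix (shortF o)).sublist.subset hv2))
    cases hv' : v.1 with
    | nil => exact absurd hv' h2
    | cons c t' => rw [hv'] at h1; simp only [List.length_cons] at h1 ⊢; omega
  have hch2 : (u :: t.takeWhile (shortF o)).Chain' (freeProd G o).Adj := by
    have h3 := hcht.prefix (List.takeWhile_prefix (shortF o))
    rw [List.takeWhile_cons_of_pos hshort] at h3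
    exact h3
  have hmain := short_run G o i (t.takeWhile (shortF o)) u hch2 hlen1 ⟨x₀, hu1v⟩
  intro v hv
  obtain ⟨x, hx⟩ := hmain v hv
  exact ⟨x, v.2.1 ⟨i, x⟩ (by rw [hx]; simp), hx⟩

lemma td_facts {i : Fin r} {n : ℕ} {l : List (FPV V o)} (hl : l ∈ setA G o i n) (hn : 1 ≤ n)
    (htd : l.tail.dropWhile (shortF o) ≠ []) :
    ∃ (xk : V i) (j : Fin r), j ≠ i ∧ xk ≠ o i ∧
      (∃ w ∈ (l.tail.takeWhile (shortF o)).getLast?, w.1 = [⟨i, xk⟩]) ∧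
      (∃ u ∈ (l.tail.dropWhile (shortF o)).head?, ∃ y : V j, (G j).Adj (o j) y ∧
        u.1 = [⟨i, xk⟩, ⟨j, y⟩]) ∧
      (∀ v ∈ l.tail.dropWhile (shortF o),
        ∃ (c : Σ i, V i) (t : List (Σ i, V i)), c.1 = j ∧ v.1 = ⟨i, xk⟩ :: c :: t) := by
  obtain ⟨hl', hndt, hroot, hcht, hlent⟩ := setA_parts G o hl
  obtain ⟨htsne, htsall⟩ := ts_facts G o hl hn
  rcases List.eq_nil_or_concat (l.tail.takeWhile (shortF o)) with h | ⟨ts', w, hts⟩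
  · exact absurd h htsne
  rw [List.concat_eq_append] at hts
  obtain ⟨xk, hxkne, hw⟩ := htsall w (by rw [hts]; simp)
  obtain ⟨u, td', htd'⟩ : ∃ u td', l.tail.dropWhile (shortF o) = u :: td' := by
    cases h : l.tail.dropWhile (shortF o) with
    | nil => exact absurd h htd
    | cons a b => exact ⟨a, b, rfl⟩
  have happ : l.tail = l.tail.takeWhile (shortF o) ++ l.tail.dropWhile (shortF o) :=
    (List.takeWhile_append_dropWhile).symm
  have hchapp := hcht
  rw [happ, List.Chain', List.isChain_append] at hchapp
  have hadjwu : (freeProd G o).Adj w u := by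
    refine hchapp.2.2 w ?_ u ?_
    · rw [hts, List.getLast?_concat]; exact rfl
    · rw [htd']; exact rfl
  have hlenu : 1 < u.1.length := by
    have hh := dropWhile_head_false (shortF o) l.tail htd'
    by_contra hc
    rw [(shortF_iff o).mpr (by omega)] at hh
    exact Bool.noConfusion hh
  have hraw := (fp_adj_iff G o w u).mp hadjwu
  obtain ⟨c, hu_eq, hc_adj⟩ := rawAdj_grow G o hraw (by rw [hw]; simpa using hlenu)
  rw [hw] at hu_eq
  have hji : c.1 ≠ i := by
    have hchain := u.2.2
    rw [hu_eq] at hchain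
    simp only [List.singleton_append] at hchain
    exact (List.isChain_cons_cons.mp hchain).1.symm
  refine ⟨xk, c.1, hji, hxkne,
    ⟨w, by rw [hts, List.getLast?_concat]; exact rfl, hw⟩,
    ⟨u, by rw [htd']; exact rfl, c.2, hc_adj, by rw [hu_eq]; rfl⟩, ?_⟩
  have hchtd : (u :: td').Chain' (freeProd G o).Adj := by
    have h2 := hchapp.2.1
    rw [htd'] at h2; exact h2
  have hdisj : (l.tail.takeWhile (shortF o)).Disjoint (l.tail.dropWhile (shortF o)) := by
    have hnd2 := hndt
    rw [happ] at hnd2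
    exact (List.nodup_append'.mp hnd2).2.2
  have hne : ∀ v' ∈ td', v'.1 ≠ ([⟨i, xk⟩] : List (Σ i, V i)) := by
    intro v' hv' hc
    have hv'w : v' = w := Subtype.ext (by rw [hc, hw])
    exact hdisj (a := w) (by rw [hts]; simp)
      (by rw [htd']; exact hv'w ▸ List.mem_cons_of_mem u hv')
  have hdeep0 : Deep ([⟨i, xk⟩] : List (Σ i, V i)) c.1 u.1 := ⟨c, [], rfl, by rw [hu_eq]⟩
  intro v hv
  rw [htd'] at hv
  obtain ⟨c', t', hc', hvv⟩ := cut G o [⟨i, xk⟩] c.1 td' u hchtd hne hdeep0 v hv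
  exact ⟨c', t', hc', by simpa using hvv⟩

lemma takeWhile_append_all {α : Type*} (p : α → Bool) :
    ∀ (A B : List α), (∀ a ∈ A, p a = true) → (∀ b ∈ B.head?, p b = false) →
      (A ++ B).takeWhile p = A ∧ (A ++ B).dropWhile p = B := by
  intro A
  induction A with
  | nil =>
    intro B _ hB
    cases B with
    | nil => simp
    | cons b B' =>
      have hb := hB b rfl
      constructor
      · simp only [List.nil_append]
        rw [List.takeWhile_cons_of_neg (by rw [hb]; exact Bool.noConfusion)]
      · simp only [List.nil_append]
        rw [List.dropWhile_cons_of_neg (by rw [hb]; exact Bool.noConfusion)]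
  | cons a A' ih =>
    intro B hA hB
    have hpa : p a = true := hA a (by simp)
    obtain ⟨h1, h2⟩ := ih B (fun x hx => hA x (by simp [hx])) hB
    constructor
    · simp only [List.cons_append, List.takeWhile_cons_of_pos hpa]
      rw [h1]
    · simp only [List.cons_append, List.dropWhile_cons_of_pos hpa]
      rw [h2]

/-- Reassemble a walk from its factor-`i` prefix and its continuation. -/
noncomputable def asm (i : Fin r) (P : List (V i)) (Q : List (FPV V o)) : List (FPV V o) :=
  fpRoot V o :: (P.tail.map (vert o i) ++ Q.tail.map (prep o ⟨i, P.getLastD (o i)⟩))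

/-- The factor-`i` prefix walk of a walk. -/
noncomputable def fP (i : Fin r) (l : List (FPV V o)) : List (V i) :=
  o i :: (l.tail.takeWhile (shortF o)).map (lx o i)

/-- The continuation walk of a walk. -/
noncomputable def fQ (l : List (FPV V o)) : List (FPV V o) :=
  fpRoot V o :: (l.tail.dropWhile (shortF o)).map (devert o)

/-- Either the trivial walk (if `m = 0`) or a walk entering some factor other than `i`. -/
def setE (i : Fin r) (m : ℕ) : Set (List (FPV V o)) :=
  if m = 0 then {[fpRoot V o]} else ⋃ j ∈ Finset.univ.erase i, setA G o j m

lemma forward {i : Fin r} {n k : ℕ} {l : List (FPV V o)} (hl : l ∈ setA G o i n) (hn : 1 ≤ n)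
    (hk : (l.tail.takeWhile (shortF o)).length = k) :
    fP o i l ∈ Wsaw (G i) (o i) k ∧ fQ o l ∈ setE G o i (n - k) ∧ 1 ≤ k ∧ k ≤ n ∧
      l = asm o i (fP o i l) (fQ o l) := by
  obtain ⟨hl', hndt, hroot, hcht, hlent⟩ := setA_parts G o hl
  obtain ⟨htsne, htsall⟩ := ts_facts G o hl hn
  have hch : l.Chain' (freeProd G o).Adj := hl.2.2.1
  have hndts : (l.tail.takeWhile (shortF o)).Nodup :=
    ((List.takeWhile_prefix _).sublist).nodup hndt
  obtain ⟨u, ts2, hts2⟩ : ∃ u ts2, l.tail.takeWhile (shortF o) = u :: ts2 := by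
    cases h : l.tail.takeWhile (shortF o) with
    | nil => exact absurd h htsne
    | cons a b => exact ⟨a, b, rfl⟩
  have hk1 : 1 ≤ k := by rw [← hk, hts2]; simp
  have hkn : k ≤ n := by rw [← hk, ← hlent]; exact (List.takeWhile_prefix _).length_le
  have hlensum : (l.tail.takeWhile (shortF o)).length
      + (l.tail.dropWhile (shortF o)).length = n := by
    rw [← List.length_append, List.takeWhile_append_dropWhile, hlent]
  have huhead : l.tail.head? = some u := by
    obtain ⟨rest, hrest⟩ := List.takeWhile_prefix (p := shortF o) (l := l.tail)
    rw [hts2] at hrest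
    rw [← hrest]; rfl
  have hadjru : (freeProd G o).Adj (fpRoot V o) u := by
    rw [hl'] at hch
    exact (List.isChain_cons.mp hch).1 u huhead
  -- the extracted prefix walk is a SAW in factor i
  have hPmem : fP o i l ∈ Wsaw (G i) (o i) k := by
    refine ⟨by simp [fP, hk], rfl, ?_, ?_⟩
    · rw [fP, List.Chain', List.isChain_cons]
      constructor
      · intro z hz
        rw [hts2] at hz
        simp only [List.map_cons, List.head?_cons, Option.mem_def, Option.some.injEq] at hz
        obtain ⟨x, hxne, hx⟩ := htsall u (by rw [hts2]; simp)
        rw [← hz, lx_spec o hx]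
        exact adj_root_letter G o hadjru hx
      · exact chain_lx G o i _ (hcht.prefix (List.takeWhile_prefix _))
          (fun v hv => (htsall v hv).imp (fun x hx => hx.2))
    · rw [fP, List.nodup_cons]
      constructor
      · intro hmem
        simp only [List.mem_map] at hmem
        obtain ⟨v, hv, hlxv⟩ := hmem
        obtain ⟨x, hxne, hx⟩ := htsall v hv
        rw [lx_spec o hx] at hlxv; exact hxne hlxv
      · refine List.Nodup.map_on ?_ hndts
        intro v hv v' hv' heq
        obtain ⟨x, -, hx⟩ := htsall v hv
        obtain ⟨x', -, hx'⟩ := htsall v' hv'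
        rw [lx_spec o hx, lx_spec o hx'] at heq
        exact Subtype.ext (by rw [hx, hx', heq])
  have hmapts : (l.tail.takeWhile (shortF o)).map (fun v => vert o i (lx o i v))
      = l.tail.takeWhile (shortF o) := by
    rw [show (l.tail.takeWhile (shortF o)).map (fun v => vert o i (lx o i v))
        = (l.tail.takeWhile (shortF o)).map id from
      List.map_congr_left (fun v hv => by
        obtain ⟨x, hxne, hx⟩ := htsall v hv
        rw [lx_spec o hx]
        exact Subtype.ext (by rw [vert_val o hxne]; exact hx.symm)), List.map_id]
  by_cases htd : l.tail.dropWhile (shortF o) = []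
  · have hkn' : k = n := by rw [htd] at hlensum; simpa [hk] using hlensum
    have hQ : fQ o l ∈ setE G o i (n - k) := by
      rw [setE, if_pos (by omega)]
      simp [fQ, htd]
    refine ⟨hPmem, hQ, hk1, hkn, ?_⟩
    rw [asm, fP, fQ, htd]
    simp only [List.map_nil, List.tail_cons, List.append_nil, List.map_map]
    rw [show vert o i ∘ lx o i = fun v => vert o i (lx o i v) from rfl, hmapts]
    have hts_all : l.tail.takeWhile (shortF o) = l.tail := by
      conv_rhs => rw [← List.takeWhile_append_dropWhile (p := shortF o) (l := l.tail)]
      rw [htd, List.append_nil]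
    rw [hts_all]; exact hl'
  · obtain ⟨xk, j, hji, hxkne, ⟨w, hwlast, hw⟩, ⟨u', hu'head, y, hyadj, hu'val⟩, hdeep⟩ :=
      td_facts G o hl hn htd
    obtain ⟨u2, td', htd'⟩ : ∃ u2 td', l.tail.dropWhile (shortF o) = u2 :: td' := by
      cases h : l.tail.dropWhile (shortF o) with
      | nil => exact absurd h htd
      | cons a b => exact ⟨a, b, rfl⟩
    have hu2 : u2 = u' := by
      rw [htd'] at hu'head
      simpa using hu'head
    subst hu2
    have hm : (l.tail.dropWhile (shortF o)).length = n - k := by omega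
    have hmne : n - k ≠ 0 := by
      rw [← hm, htd']; simp
    -- fQ ∈ setA j (n-k)
    have hQA : fQ o l ∈ setA G o j (n - k) := by
      have hchtd : (l.tail.dropWhile (shortF o)).Chain' (freeProd G o).Adj := by
        have h2 := hcht
        rw [← List.takeWhile_append_dropWhile (p := shortF o) (l := l.tail), List.Chain', List.isChain_append] at h2
        exact h2.2.1
      refine ⟨by simp [fQ, hm], rfl, ?_, ?_, ?_⟩
      · rw [fQ, List.Chain', List.isChain_cons]
        constructor
        · intro z hz
          rw [htd'] at hz
          simp only [List.map_cons, List.head?_cons, Option.mem_def, Option.some.injEq] at hz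
          subst hz
          refine (fp_adj_iff G o _ _).mpr (Or.inr (Or.inl ⟨j, y, hyadj, ?_⟩))
          show (devert o u2).1 = (fpRoot V o).1 ++ [⟨j, y⟩]
          rw [devert]
          simp only [hu'val]
          rfl
        · exact chain_devert G o ⟨i, xk⟩ _ hchtd
            (fun v hv => by
              obtain ⟨c, t, hc, hvval⟩ := hdeep v hv
              exact ⟨c, t, hvval⟩)
      · rw [fQ, List.nodup_cons]
        constructor
        · intro hmem
          simp only [List.mem_map] at hmem
          obtain ⟨v, hv, hdv⟩ := hmem
          obtain ⟨c, t, hc, hvval⟩ := hdeep v hv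
          have : (devert o v).1 = c :: t := by rw [devert]; simp [hvval]
          rw [hdv] at this
          simp [fpRoot] at this
        · refine List.Nodup.map_on ?_ (((List.dropWhile_sublist _).nodup) hndt)
          intro v hv v' hv' heq
          obtain ⟨c, t, -, hvval⟩ := hdeep v hv
          obtain ⟨c', t', -, hv'val⟩ := hdeep v' hv'
          have h1 : (devert o v).1 = c :: t := by rw [devert]; simp [hvval]
          have h2 : (devert o v').1 = c' :: t' := by rw [devert]; simp [hv'val]
          rw [heq, h2] at h1
          exact Subtype.ext (by rw [hvval, hv'val, h1])
      · refine ⟨devert o u2, ?_⟩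
        have : (devert o u2).1 = [⟨j, y⟩] := by rw [devert]; simp [hu'val]
        exact ⟨y, by rw [fQ, htd']; simp, this⟩
    have hQ : fQ o l ∈ setE G o i (n - k) := by
      rw [setE, if_neg hmne]
      exact Set.mem_biUnion (Finset.mem_erase.mpr ⟨hji, Finset.mem_univ j⟩) hQA
    refine ⟨hPmem, hQ, hk1, hkn, ?_⟩
    -- reconstruction
    have hlastP : (fP o i l).getLastD (o i) = xk := by
      rw [fP, List.getLastD_cons]
      rcases List.eq_nil_or_concat (l.tail.takeWhile (shortF o)) with h | ⟨ts', w2, htsc⟩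
      · exact absurd h htsne
      rw [List.concat_eq_append] at htsc
      have hw2 : w2 = w := by
        rw [htsc, List.getLast?_concat] at hwlast
        simpa using hwlast
      subst hw2
      rw [htsc, List.map_append, List.map_singleton, List.getLastD_concat]
      exact lx_spec o hw
    have hmaptd : (l.tail.dropWhile (shortF o)).map (fun v => prep o ⟨i, xk⟩ (devert o v))
        = l.tail.dropWhile (shortF o) := by
      rw [show ((l.tail.dropWhile (shortF o)).map (fun v => prep o ⟨i, xk⟩ (devert o v)))
          = (l.tail.dropWhile (shortF o)).map id from List.map_congr_left ?_, List.map_id]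
      intro v hv
      obtain ⟨c, t, hc, hvval⟩ := hdeep v hv
      have hdv : (devert o v).1 = c :: t := by rw [devert]; simp [hvval]
      have hcnd2 : ∀ d ∈ (devert o v).1.head?, d.1 ≠ ((⟨i, xk⟩ : Σ i, V i)).1 := by
        intro d hd
        rw [hdv] at hd
        obtain rfl : c = d := by simpa using hd
        rw [hc]
        exact hji
      show prep o ⟨i, xk⟩ (devert o v) = v
      refine Subtype.ext ?_
      rw [prep_val o hxkne hcnd2, hdv, hvval]
    rw [asm, hlastP, fP, fQ]
    simp only [List.tail_cons, List.map_map]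
    rw [show vert o i ∘ lx o i = (fun v => vert o i (lx o i v)) from rfl,
        show prep o ⟨i, xk⟩ ∘ devert o = (fun v => prep o ⟨i, xk⟩ (devert o v)) from rfl,
        hmapts, hmaptd, List.takeWhile_append_dropWhile]
    exact hl'

lemma backward {i : Fin r} {n k : ℕ} (hk1 : 1 ≤ k) (hkn : k ≤ n)
    {P : List (V i)} {Q : List (FPV V o)}
    (hP : P ∈ Wsaw (G i) (o i) k) (hQ : Q ∈ setE G o i (n - k)) :
    asm o i P Q ∈ setA G o i n ∧ ((asm o i P Q).tail.takeWhile (shortF o)).length = k ∧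
      fP o i (asm o i P Q) = P ∧ fQ o (asm o i P Q) = Q := by
  obtain ⟨hPlen, hPhd, hPch, hPnd⟩ := hP
  have hPeq : P = o i :: P.tail := head_decomp hPhd
  set xs := P.tail with hxs
  have hxs_len : xs.length = k := by rw [hxs, List.length_tail, hPlen]; omega
  have hxs_ne : xs ≠ [] := by
    intro hc; rw [hc] at hxs_len; simp at hxs_len; omega
  have ho_nxs : o i ∉ xs := by rw [hPeq] at hPnd; exact (List.nodup_cons.mp hPnd).1
  have hxs_nd : xs.Nodup := by rw [hPeq] at hPnd; exact (List.nodup_cons.mp hPnd).2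
  have hall_ne : ∀ x ∈ xs, x ≠ o i := fun x hx hc => ho_nxs (hc ▸ hx)
  have hxs_ch : xs.Chain' (G i).Adj := by
    have := hPch; rw [hPeq] at this; exact this.tail
  obtain ⟨x₁, xs', hxs1⟩ : ∃ x₁ xs', xs = x₁ :: xs' := by
    cases h : xs with
    | nil => exact absurd h hxs_ne
    | cons a b => exact ⟨a, b, rfl⟩
  obtain ⟨xs'', xk, hxsc⟩ : ∃ xs'' xk, xs = xs'' ++ [xk] := by
    rcases List.eq_nil_or_concat xs with h | ⟨a, b, h⟩
    · exact absurd h hxs_ne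
    · exact ⟨a, b, by rw [h, List.concat_eq_append]⟩
  have hxk_mem : xk ∈ xs := by rw [hxsc]; simp
  have hxk_ne : xk ≠ o i := hall_ne xk hxk_mem
  have hd_eq : P.getLastD (o i) = xk := by
    rw [hPeq, List.getLastD_cons, hxsc, List.getLastD_concat]
  have hadj_o_x1 : (G i).Adj (o i) x₁ := by
    have := hPch; rw [hPeq, hxs1] at this; exact (List.isChain_cons_cons.mp this).1
  have hasm : asm o i P Q
      = fpRoot V o :: (xs.map (vert o i) ++ Q.tail.map (prep o ⟨i, xk⟩)) := by
    rw [asm, hd_eq]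
  have hA_val : ∀ x ∈ xs, (vert o i x).1 = [⟨i, x⟩] := fun x hx => vert_val o (hall_ne x hx)
  have hA_chain : (xs.map (vert o i)).Chain' (freeProd G o).Adj := chain_vert G o i xs hxs_ch hall_ne
  have hA_short : ∀ a ∈ xs.map (vert o i), shortF o a = true := by
    intro a ha
    simp only [List.mem_map] at ha
    obtain ⟨x, hx, rfl⟩ := ha
    exact (shortF_iff o).mpr (by rw [hA_val x hx]; simp)
  have hA_nd : (xs.map (vert o i)).Nodup := by
    refine List.Nodup.map_on ?_ hxs_nd
    intro x hx x' hx' heq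
    have h2 := congrArg Subtype.val heq
    rw [hA_val x hx, hA_val x' hx'] at h2
    exact sigma_mk_inj (by injection h2)
  have hA_root : ∀ a ∈ xs.map (vert o i), a ≠ fpRoot V o := by
    intro a ha hc
    simp only [List.mem_map] at ha
    obtain ⟨x, hx, rfl⟩ := ha
    have := hA_val x hx
    rw [hc] at this
    simp [fpRoot] at this
  have hA_last : (xs.map (vert o i)).getLast? = some (vert o i xk) := by
    rw [hxsc, List.map_append, List.map_singleton, List.getLast?_concat]
  have hA_head : (xs.map (vert o i)).head? = some (vert o i x₁) := by
    rw [hxs1]; rfl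
  have hadj_root_x1 : (freeProd G o).Adj (fpRoot V o) (vert o i x₁) := by
    refine (fp_adj_iff G o _ _).mpr (Or.inr (Or.inl ⟨i, x₁, hadj_o_x1, ?_⟩))
    rw [vert_val o (hall_ne x₁ (by rw [hxs1]; simp))]
    rfl
  have hfP_of : o i :: (xs.map (vert o i)).map (lx o i) = P := by
    rw [List.map_map, show lx o i ∘ vert o i = fun x => lx o i (vert o i x) from rfl,
      show xs.map (fun x => lx o i (vert o i x)) = xs.map id from
        List.map_congr_left (fun x hx => lx_vert o (hall_ne x hx)), List.map_id]
    exact hPeq.symm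
  by_cases hm0 : n - k = 0
  · -- k = n, trivial continuation
    have hkn' : k = n := by omega
    have hQeq : Q = [fpRoot V o] := by
      rw [setE, if_pos hm0] at hQ
      exact hQ
    have hQt : Q.tail = [] := by rw [hQeq]; rfl
    rw [hasm, hQt]
    simp only [List.map_nil, List.append_nil]
    have htw : ((xs.map (vert o i)) ++ ([] : List (FPV V o))).takeWhile (shortF o)
        = xs.map (vert o i) :=
      (takeWhile_append_all (shortF o) (xs.map (vert o i)) [] hA_short (by simp)).1
    rw [List.append_nil] at htw
    have hdw : ((xs.map (vert o i)) ++ ([] : List (FPV V o))).dropWhile (shortF o)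
        = ([] : List (FPV V o)) :=
      (takeWhile_append_all (shortF o) (xs.map (vert o i)) [] hA_short (by simp)).2
    rw [List.append_nil] at hdw
    refine ⟨⟨?_, rfl, ?_, ?_, ?_⟩, ?_, ?_, ?_⟩
    · simp only [List.length_cons, List.length_map, hxs_len]
      omega
    · rw [List.Chain', List.isChain_cons]
      refine ⟨?_, hA_chain⟩
      intro z hz
      rw [hA_head] at hz
      obtain rfl : vert o i x₁ = z := by simpa using hz
      exact hadj_root_x1
    · rw [List.nodup_cons]
      exact ⟨fun hc => hA_root _ hc rfl, hA_nd⟩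
    · refine ⟨vert o i x₁, x₁, ?_, vert_val o (hall_ne x₁ (by rw [hxs1]; simp))⟩
      rw [hxs1]; simp
    · simp only [List.tail_cons]
      rw [htw]
      simp [hxs_len]
    · rw [fP]
      simp only [List.tail_cons]
      rw [htw]
      exact hfP_of
    · rw [fQ]
      simp only [List.tail_cons]
      rw [hdw, List.map_nil, hQeq]
  · -- continuation enters factor j ≠ i
    rw [setE, if_neg hm0] at hQ
    simp only [Set.mem_iUnion] at hQ
    obtain ⟨j, hjmem, hQA⟩ := hQ
    have hji : j ≠ i := (Finset.mem_erase.mp hjmem).1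
    obtain ⟨hQl', hQnd, hQroot, hQch, hQlent⟩ := setA_parts G o hQA
    have hQstr := setA_struct G o hQA
    have hQchain : Q.Chain' (freeProd G o).Adj := hQA.2.2.1
    obtain ⟨qh, qt', hqt0⟩ : ∃ qh qt', Q.tail = qh :: qt' := by
      cases h : Q.tail with
      | nil => exfalso; rw [h] at hQlent; simp at hQlent; omega
      | cons a b => exact ⟨a, b, rfl⟩
    obtain ⟨-, -, -, -, q₁, y, hq1, hq1v⟩ := hQA
    have hqh : qh = q₁ := by rw [hQl', hqt0] at hq1; simpa using hq1
    have hqt : Q.tail = q₁ :: qt' := by rw [hqt0, hqh]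
    have hadjrq : (freeProd G o).Adj (fpRoot V o) q₁ := by
      rw [hQl', hqt] at hQchain
      exact (List.isChain_cons_cons.mp hQchain).1
    have hyadj : (G j).Adj (o j) y := adj_root_letter G o hadjrq hq1v
    have hprep_cond : ∀ v ∈ Q.tail, ∀ e ∈ v.1.head?, e.1 ≠ ((⟨i, xk⟩ : Σ i, V i)).1 := by
      intro v hv e he
      obtain ⟨c, t, hc, hvval⟩ := hQstr v hv
      rw [hvval] at he
      obtain rfl : c = e := by simpa using he
      rw [hc]
      exact hji
    have hB_val : ∀ v ∈ Q.tail, (prep o ⟨i, xk⟩ v).1 = ⟨i, xk⟩ :: v.1 :=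
      fun v hv => prep_val o hxk_ne (hprep_cond v hv)
    have hadj_k_q : (freeProd G o).Adj (vert o i xk) (prep o ⟨i, xk⟩ q₁) := by
      refine (fp_adj_iff G o _ _).mpr (Or.inr (Or.inl ⟨j, y, hyadj, ?_⟩))
      rw [hB_val q₁ (by rw [hqt]; simp), vert_val o hxk_ne, hq1v]
      rfl
    have hB_long : ∀ b ∈ Q.tail.map (prep o ⟨i, xk⟩), shortF o b = false := by
      intro b hb
      simp only [List.mem_map] at hb
      obtain ⟨v, hv, rfl⟩ := hb
      obtain ⟨c, t, -, hvval⟩ := hQstr v hv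
      refine shortF_false o ?_
      rw [hB_val v hv, hvval]
      simp
    have hB_chain : (Q.tail.map (prep o ⟨i, xk⟩)).Chain' (freeProd G o).Adj :=
      chain_prep G o ⟨i, xk⟩ hxk_ne Q.tail hQch hprep_cond
    have hB_nd : (Q.tail.map (prep o ⟨i, xk⟩)).Nodup := by
      refine List.Nodup.map_on ?_ hQnd
      intro v hv v' hv' heq
      have h2 := congrArg Subtype.val heq
      rw [hB_val v hv, hB_val v' hv'] at h2
      exact Subtype.ext (by injection h2)
    have hB_root : ∀ b ∈ Q.tail.map (prep o ⟨i, xk⟩), b ≠ fpRoot V o := by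
      intro b hb hc
      simp only [List.mem_map] at hb
      obtain ⟨v, hv, rfl⟩ := hb
      have h2 := hB_val v hv
      rw [hc] at h2
      simp [fpRoot] at h2
    have hB_head : (Q.tail.map (prep o ⟨i, xk⟩)).head? = some (prep o ⟨i, xk⟩ q₁) := by
      rw [hqt]; rfl
    have htw := takeWhile_append_all (shortF o) (xs.map (vert o i))
      (Q.tail.map (prep o ⟨i, xk⟩)) hA_short
      (by intro b hb; rw [hB_head] at hb; obtain rfl : prep o ⟨i, xk⟩ q₁ = b := by simpa using hb
          exact hB_long _ (by rw [hqt]; simp))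
    rw [hasm]
    refine ⟨⟨?_, rfl, ?_, ?_, ?_⟩, ?_, ?_, ?_⟩
    · simp only [List.length_cons, List.length_append, List.length_map, hxs_len, hQlent]
      omega
    · rw [List.Chain', List.isChain_cons]
      constructor
      · intro z hz
        rw [List.head?_append, hA_head] at hz
        obtain rfl : vert o i x₁ = z := by simpa using hz
        exact hadj_root_x1
      · rw [List.isChain_append]
        refine ⟨hA_chain, hB_chain, ?_⟩
        intro a ha b hb
        rw [hA_last] at ha
        rw [hB_head] at hb
        obtain rfl : vert o i xk = a := by simpa using ha
        obtain rfl : prep o ⟨i, xk⟩ q₁ = b := by simpa using hb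
        exact hadj_k_q
    · rw [List.nodup_cons]
      constructor
      · intro hc
        rcases List.mem_append.mp hc with h | h
        · exact hA_root _ h rfl
        · exact hB_root _ h rfl
      · rw [List.nodup_append']
        refine ⟨hA_nd, hB_nd, ?_⟩
        intro a haA haB
        have h1 := hA_short a haA
        have h2 := hB_long a haB
        rw [h1] at h2
        exact Bool.noConfusion h2
    · refine ⟨vert o i x₁, x₁, ?_, vert_val o (hall_ne x₁ (by rw [hxs1]; simp))⟩
      rw [hxs1]
      simp
    · simp only [List.tail_cons]
      rw [htw.1]
      simp [hxs_len]
    · rw [fP]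
      simp only [List.tail_cons]
      rw [htw.1]
      exact hfP_of
    · rw [fQ]
      simp only [List.tail_cons]
      rw [htw.2, List.map_map]
      have hmapQ : Q.tail.map (devert o ∘ prep o ⟨i, xk⟩) = Q.tail := by
        rw [show (Q.tail.map (devert o ∘ prep o ⟨i, xk⟩)) = Q.tail.map id from
          List.map_congr_left ?_, List.map_id]
        intro v hv
        show devert o (prep o ⟨i, xk⟩ v) = v
        refine Subtype.ext ?_
        show (prep o ⟨i, xk⟩ v).1.tail = v.1
        rw [hB_val v hv, List.tail_cons]
      rw [hmapQ]
      exact hQl'.symm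

lemma sawCountVia_zero (j : Fin r) : sawCountVia G o j 0 = 0 := by
  rw [sawCountVia_eq_ncard, setA_zero]
  simp

lemma ncard_biUnion {ι α : Type*} (K : Finset ι) (f : ι → Set α)
    (hfin : ∀ j ∈ K, (f j).Finite)
    (hdisj : ∀ j ∈ K, ∀ j' ∈ K, j ≠ j' → Disjoint (f j) (f j')) :
    (⋃ j ∈ K, f j).ncard = ∑ j ∈ K, (f j).ncard := by
  classical
  revert hfin hdisj
  induction K using Finset.induction_on with
  | empty => intro _ _; simp
  | @insert a K' ha ih =>
    intro hfin hdisj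
    rw [Finset.sum_insert ha, Finset.set_biUnion_insert]
    have hKfin : (⋃ j ∈ K', f j).Finite :=
      Set.Finite.biUnion K'.finite_toSet (fun j hj => hfin j (by simp only [Finset.mem_coe] at hj; exact Finset.mem_insert_of_mem hj))
    have hdisj2 : Disjoint (f a) (⋃ j ∈ K', f j) := by
      refine Set.disjoint_left.mpr ?_
      intro x hx hx'
      simp only [Set.mem_iUnion] at hx'
      obtain ⟨j, hj, hxj⟩ := hx'
      exact Set.disjoint_left.mp
        (hdisj a (by simp) j (by simp [hj]) (fun h => ha (h ▸ hj))) hx hxj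
    rw [Set.ncard_union_eq hdisj2 (hfin a (by simp)) hKfin,
      ih (fun j hj => hfin j (by simp [hj]))
        (fun j hj j' hj' => hdisj j (by simp [hj]) j' (by simp [hj']))]

lemma fiber_count (hlf : ∀ i, LocFinite (G i)) {i : Fin r} {n k : ℕ}
    (hk1 : 1 ≤ k) (hkn : k ≤ n) :
    {l | l ∈ setA G o i n ∧ (l.tail.takeWhile (shortF o)).length = k}.ncard
      = (Wsaw (G i) (o i) k).ncard * (setE G o i (n - k)).ncard := by
  have hn : 1 ≤ n := le_trans hk1 hkn
  have hbij : Set.BijOn (fun l => (fP o i l, fQ o l))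
      {l | l ∈ setA G o i n ∧ (l.tail.takeWhile (shortF o)).length = k}
      ((Wsaw (G i) (o i) k) ×ˢ (setE G o i (n - k))) := by
    refine ⟨?_, ?_, ?_⟩
    · rintro l ⟨hl, hk'⟩
      obtain ⟨h1, h2, -, -, -⟩ := forward G o hl hn hk'
      exact Set.mem_prod.mpr ⟨h1, h2⟩
    · rintro l ⟨hl, hk'⟩ l' ⟨hl', hk''⟩ heq
      obtain ⟨-, -, -, -, h5⟩ := forward G o hl hn hk'
      obtain ⟨-, -, -, -, h5'⟩ := forward G o hl' hn hk''
      have hPeq : fP o i l = fP o i l' := congrArg Prod.fst heq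
      have hQeq : fQ o l = fQ o l' := congrArg Prod.snd heq
      rw [h5, h5', hPeq, hQeq]
    · rintro ⟨P, Q⟩ ⟨hP, hQ⟩
      obtain ⟨h1, h2, h3, h4⟩ := backward G o hk1 hkn hP hQ
      exact ⟨asm o i P Q, ⟨h1, h2⟩, by rw [Prod.mk.injEq]; exact ⟨h3, h4⟩⟩
  rw [← Nat.card_coe_set_eq, ← Nat.card_coe_set_eq, ← Nat.card_coe_set_eq,
    Nat.card_congr (hbij.equiv _), Nat.card_congr (Equiv.Set.prod _ _), Nat.card_prod]

lemma setE_ncard (hlf : ∀ i, LocFinite (G i)) (i : Fin r) (m : ℕ) :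
    (setE G o i m).ncard
      = if m = 0 then 1 else ∑ j ∈ Finset.univ.erase i, sawCountVia G o j m := by
  by_cases hm : m = 0
  · rw [setE, if_pos hm, if_pos hm]
    simp
  · rw [setE, if_neg hm, if_neg hm]
    rw [ncard_biUnion _ _ (fun j _ => setA_finite G o hlf j m) ?_]
    · exact Finset.sum_congr rfl (fun j _ => (sawCountVia_eq_ncard G o j m).symm)
    · intro j hj j' hj' hne
      rw [Set.disjoint_left]
      rintro l ⟨-, -, -, -, v, x, hv, hvv⟩ ⟨-, -, -, -, v', x', hv', hvv'⟩
      rw [hv] at hv'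
      obtain rfl : v = v' := by injection hv'
      rw [hvv] at hvv'
      have h2 : (⟨j, x⟩ : Σ i, V i) = ⟨j', x'⟩ := by injection hvv'
      exact hne (Sigma.mk.inj_iff.mp h2).1

lemma setA_count (hlf : ∀ i, LocFinite (G i)) (i : Fin r) {n : ℕ} (hn : 1 ≤ n) :
    sawCountVia G o i n = ∑ k ∈ Finset.Icc 1 n,
      sawCount (G i) (o i) k * (setE G o i (n - k)).ncard := by
  rw [sawCountVia_eq_ncard]
  have hcover : setA G o i n = ⋃ k ∈ Finset.Icc 1 n,
      {l | l ∈ setA G o i n ∧ (l.tail.takeWhile (shortF o)).length = k} := by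
    ext l
    simp only [Set.mem_iUnion, Set.mem_setOf_eq]
    constructor
    · intro hl
      obtain ⟨-, -, hk1, hkn, -⟩ := forward G o hl hn rfl
      exact ⟨_, Finset.mem_Icc.mpr ⟨hk1, hkn⟩, hl, rfl⟩
    · rintro ⟨k, -, hl, -⟩
      exact hl
  rw [hcover, ncard_biUnion]
  · refine Finset.sum_congr rfl (fun k hk => ?_)
    obtain ⟨hk1, hkn⟩ := Finset.mem_Icc.mp hk
    rw [fiber_count G o hlf hk1 hkn, sawCount_eq_ncard]
  · intro k hk
    exact (setA_finite G o hlf i n).subset (fun l hl => hl.1)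
  · intro k hk k' hk' hne
    rw [Set.disjoint_left]
    rintro l ⟨-, h1⟩ ⟨-, h2⟩
    exact hne (h1 ▸ h2 ▸ rfl)

end FPaux

/-- On the free product `G = G₁ * ⋯ * G_r` of connected, locally finite, quasi-transitive
rooted graphs, for each `i` the generating function `Mᵢ*(z)` of SAWs from the root that
visit `Vᵢ \ {oᵢ}` satisfies `Mᵢ*(z) = Mᵢ(z)·(1 + Σ_{j≠i} Mⱼ*(z))` as formal power series. -/
theorem freeProd_Mstar_equation {r : ℕ} (hr : 2 ≤ r)
    (V : Fin r → Type) (G : ∀ i, SimpleGraph (V i)) (o : ∀ i, V i)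
    (hconn : ∀ i, (G i).Connected) (hqt : ∀ i, QuasiTransitive (G i))
    (hlf : ∀ i, LocFinite (G i)) (hnt : ∀ i, Nontrivial (V i))
    (i : Fin r) :
    (PowerSeries.mk fun n => (sawCountVia G o i n : ℚ))
      = (PowerSeries.mk fun n => if n = 0 then (0 : ℚ) else (sawCount (G i) (o i) n : ℚ))
        * (1 + ∑ j ∈ Finset.univ.erase i,
            PowerSeries.mk fun n => (sawCountVia G o j n : ℚ)) := by
  classical
  refine PowerSeries.ext fun n => ?_
  rw [PowerSeries.coeff_mk, PowerSeries.coeff_mul,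
    Finset.Nat.sum_antidiagonal_eq_sum_range_succ_mk]
  rcases Nat.eq_zero_or_pos n with rfl | hn
  · rw [FPaux.sawCountVia_zero G o i, Finset.sum_range_one, PowerSeries.coeff_mk]
    simp
  · have hterm : ∀ k ∈ Finset.Icc 1 n,
        ((sawCount (G i) (o i) k * (FPaux.setE G o i (n - k)).ncard : ℕ) : ℚ)
        = (PowerSeries.coeff k)
            (PowerSeries.mk fun m => if m = 0 then (0 : ℚ) else (sawCount (G i) (o i) m : ℚ))
          * (PowerSeries.coeff (n - k)) (1 + ∑ j ∈ Finset.univ.erase i,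
              PowerSeries.mk fun m => (sawCountVia G o j m : ℚ)) := by
      intro k hk
      obtain ⟨hk1, hkn⟩ := Finset.mem_Icc.mp hk
      rw [PowerSeries.coeff_mk, if_neg (by omega), map_add, PowerSeries.coeff_one, map_sum]
      simp only [PowerSeries.coeff_mk]
      rw [FPaux.setE_ncard G o hlf i (n - k)]
      by_cases h0 : n - k = 0
      · rw [if_pos h0, if_pos h0, h0]
        push_cast
        simp [FPaux.sawCountVia_zero G o]
      · rw [if_neg h0, if_neg h0]
        push_cast
        ring
    rw [FPaux.setA_count G o hlf i hn, Nat.cast_sum, Finset.sum_congr rfl hterm]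
    refine Finset.sum_subset ?_ ?_
    · intro k hk
      simp only [Finset.mem_Icc] at hk
      simp only [Finset.mem_range]
      omega
    · intro k hk hknot
      have hk0 : k = 0 := by
        simp only [Finset.mem_range] at hk
        simp only [Finset.mem_Icc] at hknot
        omega
      rw [hk0, PowerSeries.coeff_mk]
      simp
end

section
/- If a quasi-transitive graph G₁ satisfies σₙ^{(1)} ≥ μ₁ⁿ for all n (where μ₁ is its connective constant), then the number σₙ of SAWs of length n in any free product G = G₁ * G₂ * ⋯ satisfies σₙ ≥ μ₁^{n−1}·(1 + μ₁^{−1})^{⌊n/2⌋ − 1} for all n ≥ 2. -/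
open Filter Topology

-- ## Finiteness of walk sets
lemma chainWalk_finite {W : Type*} (G : SimpleGraph W) (hG : LocFinite G) :
    ∀ (n : ℕ) (v : W),
      {l : List W | l.length = n + 1 ∧ l.head? = some v ∧ l.Chain' G.Adj}.Finite := by
  intro n
  induction n with
  | zero =>
    intro v
    apply Set.Finite.subset (Set.finite_singleton [v])
    rintro l ⟨hl, hh, -⟩
    match l, hl with
    | [a], _ => simp_all
  | succ n ih =>
    intro v
    apply Set.Finite.subset
      (Set.Finite.biUnion (hG v) (fun x _ => (ih x).image (List.cons v)))
    rintro l ⟨hl, hh, hc⟩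
    obtain ⟨a, t', rfl⟩ : ∃ a t', l = a :: t' := by
      cases l with
      | nil => simp at hh
      | cons a t' => exact ⟨a, t', rfl⟩
    have hav : v = a := (by simpa using hh : a = v).symm
    subst hav
    obtain ⟨x, t, rfl⟩ : ∃ x t, t' = x :: t := by
      cases t' with
      | nil => simp at hl
      | cons x t => exact ⟨x, t, rfl⟩
    have hadj : G.Adj v x := (List.isChain_cons_cons.mp hc).1
    refine Set.mem_biUnion hadj ⟨x :: t, ⟨?_, rfl, (List.isChain_cons_cons.mp hc).2⟩, rfl⟩
    simpa using hl

lemma sawSet_finite {W : Type*} (G : SimpleGraph W) (hG : LocFinite G) (v : W) (n : ℕ) :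
    {l : List W | l.length = n + 1 ∧ l.head? = some v ∧ l.Chain' G.Adj ∧ l.Nodup}.Finite :=
  (chainWalk_finite G hG n v).subset (fun l ⟨h1, h2, h3, _⟩ => ⟨h1, h2, h3⟩)

-- ## Free product basics
section FP
variable {r : ℕ} {V : Fin r → Type} (G : ∀ i, SimpleGraph (V i)) (o : ∀ i, V i)

lemma freeProd_adj_iff (a b : FPV V o) :
    (freeProd G o).Adj a b ↔ a ≠ b ∧ (RawAdj G o a.1 b.1 ∨ RawAdj G o b.1 a.1) := by
  simp [freeProd, SimpleGraph.fromRel_adj]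

lemma rootNbrs_finite (hlf : ∀ i, LocFinite (G i)) :
    ({y : Σ i, V i | (G y.1).Adj (o y.1) y.2}).Finite := by
  have : {y : Σ i, V i | (G y.1).Adj (o y.1) y.2}
      = ⋃ i, Sigma.mk i '' ((G i).neighborSet (o i)) := by
    ext ⟨i, v⟩
    constructor
    · intro h; exact Set.mem_iUnion.mpr ⟨i, ⟨v, h, rfl⟩⟩
    · intro h
      obtain ⟨i', x, hx, heq⟩ := Set.mem_iUnion.mp h
      obtain ⟨rfl, h2⟩ := Sigma.mk.inj_iff.mp heq
      obtain rfl := eq_of_heq h2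
      exact hx
  rw [this]
  exact Set.finite_iUnion (fun i => (hlf i (o i)).image _)

lemma lastNbrs_finite (hlf : ∀ i, LocFinite (G i)) (L : List (Σ i, V i)) :
    ({y : Σ i, V i | ∃ x, L.getLast? = some ⟨y.1, x⟩ ∧ (G y.1).Adj x y.2}).Finite := by
  cases h : L.getLast? with
  | none => apply Set.Finite.subset (Set.finite_empty); rintro y ⟨x, hx, -⟩; simp [h] at hx
  | some z =>
    obtain ⟨iz, xz⟩ := z
    apply Set.Finite.subset ((hlf iz xz).image (Sigma.mk iz))
    rintro ⟨iy, vy⟩ ⟨x, hx, hadj⟩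
    rw [Option.some_inj] at hx
    obtain ⟨rfl, hx2⟩ := Sigma.mk.inj_iff.mp hx
    obtain rfl := eq_of_heq hx2
    exact ⟨vy, hadj, rfl⟩

lemma freeProd_locFinite (hlf : ∀ i, LocFinite (G i)) : LocFinite (freeProd G o) := by
  intro a
  have hbig : (({a.1.dropLast} : Set (List (Σ i, V i)))
      ∪ ((fun y : Σ i, V i => a.1.dropLast ++ [y]) ''
          {y | ∃ x, a.1.getLast? = some ⟨y.1, x⟩ ∧ (G y.1).Adj x y.2})
      ∪ ((fun y : Σ i, V i => a.1 ++ [y]) '' {y : Σ i, V i | (G y.1).Adj (o y.1) y.2})).Finite :=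
    ((Set.finite_singleton _).union ((lastNbrs_finite G hlf a.1).image _)).union
      ((rootNbrs_finite G o hlf).image _)
  apply Set.Finite.subset (hbig.preimage (Subtype.val_injective.injOn))
  intro b hb
  replace hb := (freeProd_adj_iff G o a b).mp hb
  obtain ⟨-, hb | hb⟩ := hb <;> rcases hb with ⟨w, i, x, y, hadj, h1, h2⟩ | ⟨i, y, hadj, h1⟩ | ⟨i, y, hadj, h1⟩
  · left; right
    refine ⟨⟨i, y⟩, ⟨x, ?_, hadj⟩, ?_⟩
    · rw [h1, List.getLast?_concat]
    · rw [h1, List.dropLast_concat, h2]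
  · right; exact ⟨⟨i, y⟩, hadj, h1.symm⟩
  · left; left; rw [h1, List.dropLast_concat]; exact rfl
  · left; right
    refine ⟨⟨i, x⟩, ⟨y, ?_, hadj.symm⟩, ?_⟩
    · rw [h2, List.getLast?_concat]
    · rw [h2, List.dropLast_concat, h1]
  · left; left; rw [h1, List.dropLast_concat]; exact rfl
  · right; exact ⟨⟨i, y⟩, hadj, h1.symm⟩

end FP

-- ## The block construction
section Build
variable {r : ℕ} {V : Fin r → Type}

/-- Tail of a SAW from `ov`. -/
def SAWtail {W : Type} (Gi : SimpleGraph W) (ov : W) (t : List W) : Prop :=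
  t ≠ [] ∧ List.Chain Gi.Adj ov t ∧ ov ∉ t ∧ t.Nodup

/-- Raw symmetrized free-product adjacency. -/
def FPR (G : ∀ i, SimpleGraph (V i)) (o : ∀ i, V i) (a b : List (Σ i, V i)) : Prop :=
  a ≠ b ∧ (RawAdj G o a b ∨ RawAdj G o b a)

def build (i₀ j : Fin r) (o : ∀ i, V i) (y₀ : V j) :
    List (Σ i, V i) → List (List (V i₀)) → List (List (Σ i, V i))
  | _, [] => []
  | w, [t] => t.map (fun x => w ++ [⟨i₀, x⟩])
  | w, t :: t' :: L =>
      t.map (fun x => w ++ [⟨i₀, x⟩]) ++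
        ((w ++ [⟨i₀, t.getLastD (o i₀)⟩]) ++ [⟨j, y₀⟩]) ::
          build i₀ j o y₀ ((w ++ [⟨i₀, t.getLastD (o i₀)⟩]) ++ [⟨j, y₀⟩]) (t' :: L)

variable {i₀ j : Fin r} {o : ∀ i, V i} {y₀ : V j}

lemma concat_inj (w : List (Σ i, V i)) :
    Function.Injective (fun x : V i₀ => w ++ [⟨i₀, x⟩]) := by
  intro x y h
  simp only [List.append_cancel_left_eq, List.cons.injEq] at h
  exact eq_of_heq (Sigma.mk.inj_iff.mp h.1).2

lemma getLastD_mem {α : Type*} : ∀ (t : List α) (d : α), t ≠ [] → t.getLastD d ∈ t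
  | [], _, h => absurd rfl h
  | [a], _, _ => by simp
  | a :: b :: t, d, _ => by
      rw [List.getLastD_cons]
      exact List.mem_cons_of_mem a (getLastD_mem (b :: t) a (by simp))

lemma getLastD_map {α β : Type*} (f : α → β) :
    ∀ (t : List α) (d : α) (d' : β), t ≠ [] → (t.map f).getLastD d' = f (t.getLastD d)
  | [], _, _, h => absurd rfl h
  | [a], _, _, _ => by simp
  | a :: b :: t, d, d', _ => by
      rw [List.map_cons, List.getLastD_cons, List.getLastD_cons]
      exact getLastD_map f (b :: t) a (f a) (by simp)

lemma build_length (i₀ j : Fin r) (o : ∀ i, V i) (y₀ : V j) :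
    ∀ (L : List (List (V i₀))) (w : List (Σ i, V i)), L ≠ [] →
      (build i₀ j o y₀ w L).length + 1 = (L.map List.length).sum + L.length
  | [], _, h => absurd rfl h
  | [t], w, _ => by simp [build]
  | t :: t' :: L, w, _ => by
      have ih := build_length i₀ j o y₀ (t' :: L) 
        ((w ++ [⟨i₀, t.getLastD (o i₀)⟩]) ++ [⟨j, y₀⟩]) (by simp)
      simp only [build, List.length_append, List.length_map, List.length_cons,
        List.map_cons, List.sum_cons] at ih ⊢
      omega

lemma build_mem_length :
    ∀ (L : List (List (V i₀))) (w : List (Σ i, V i)) (u : List (Σ i, V i)),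
      u ∈ build i₀ j o y₀ w L → w.length < u.length
  | [], _, _, h => absurd h List.not_mem_nil
  | [t], w, u, h => by
      simp only [build, List.mem_map] at h
      obtain ⟨x, -, rfl⟩ := h
      simp
  | t :: t' :: L, w, u, h => by
      simp only [build, List.mem_append, List.mem_cons] at h
      rcases h with h | h | h
      · obtain ⟨x, -, rfl⟩ := List.mem_map.mp h
        simp
      · subst h; simp
      · have := build_mem_length (t' :: L) _ u h
        simp only [List.length_append, List.length_cons] at this ⊢
        omega

lemma validWord_concat {w : List (Σ i, V i)} {a : Σ i, V i} (hw : ValidWord o w)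
    (hl : ∀ z ∈ w.getLast?, z.1 ≠ a.1) (ha : a.2 ≠ o a.1) : ValidWord o (w ++ [a]) := by
  constructor
  · intro x hx
    rcases List.mem_append.mp hx with h | h
    · exact hw.1 x h
    · rw [List.mem_singleton] at h; subst h; exact ha
  · simp only [List.Chain']; rw [List.isChain_append]
    exact ⟨hw.2, List.isChain_singleton _, fun x hx y hy => by
      rw [List.head?_cons, Option.mem_def, Option.some_inj] at hy
      subst hy; exact hl x hx⟩

lemma build_valid (G : ∀ i, SimpleGraph (V i)) (hij : j ≠ i₀) (hy₀ : (G j).Adj (o j) y₀) :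
    ∀ (L : List (List (V i₀))) (w : List (Σ i, V i)),
      (∀ t ∈ L, SAWtail (G i₀) (o i₀) t) → ValidWord o w →
      (∀ z ∈ w.getLast?, z.1 ≠ i₀) →
      ∀ u ∈ build i₀ j o y₀ w L, ValidWord o u
  | [], _, _, _, _, _, h => absurd h List.not_mem_nil
  | [t], w, hL, hw, hwl, u, h => by
      simp only [build, List.mem_map] at h
      obtain ⟨x, hx, rfl⟩ := h
      exact validWord_concat hw hwl (fun hxo => (hL t (by simp)).2.2.1 (hxo ▸ hx))
  | t :: t' :: L, w, hL, hw, hwl, u, h => by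
      have ht := hL t (by simp)
      have hz : t.getLastD (o i₀) ∈ t := getLastD_mem t _ ht.1
      have hv1 : ValidWord o (w ++ [⟨i₀, t.getLastD (o i₀)⟩]) :=
        validWord_concat hw hwl (fun hc => ht.2.2.1 (hc ▸ hz))
      have hv2 : ValidWord o ((w ++ [⟨i₀, t.getLastD (o i₀)⟩]) ++ [⟨j, y₀⟩]) :=
        validWord_concat hv1
          (by rw [List.getLast?_concat]
              intro z hz2
              rw [Option.mem_def, Option.some_inj] at hz2
              subst hz2
              exact hij.symm) hy₀.ne'
      simp only [build, List.mem_append, List.mem_cons] at h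
      rcases h with h | h | h
      · obtain ⟨x, hx, rfl⟩ := List.mem_map.mp h
        exact validWord_concat hw hwl (fun hxo => ht.2.2.1 (hxo ▸ hx))
      · subst h; exact hv2
      · refine build_valid G hij hy₀ (t' :: L) _ (fun s hs => hL s (List.mem_cons_of_mem _ hs))
          hv2 ?_ u h
        rw [List.getLast?_concat]
        intro z hz2
        rw [Option.mem_def, Option.some_inj] at hz2
        subst hz2
        exact hij

lemma chain_concat {α : Type*} {R : α → α → Prop} :
    ∀ {l : List α} {a b : α}, List.Chain R a l → R (l.getLastD a) b → List.Chain R a (l ++ [b])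
  | [], a, b, _, hr => List.Chain.cons hr List.Chain.nil
  | c :: l, a, b, hc, hr => by
      simp only [List.Chain, List.chain_cons] at hc
      simp only [List.Chain, List.cons_append, List.chain_cons]
      exact ⟨hc.1, chain_concat hc.2 (by rwa [List.getLastD_cons] at hr)⟩

section ChainBuild
variable (G : ∀ i, SimpleGraph (V i))

lemma fpr_inner {w : List (Σ i, V i)} {x y : V i₀} (h : (G i₀).Adj x y) :
    FPR G o (w ++ [⟨i₀, x⟩]) (w ++ [⟨i₀, y⟩]) := by
  refine ⟨fun hc => h.ne (concat_inj w hc), Or.inl (Or.inl ⟨w, i₀, x, y, h, rfl, rfl⟩)⟩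

lemma fpr_root {w : List (Σ i, V i)} {i : Fin r} {y : V i} (h : (G i).Adj (o i) y) :
    FPR G o w (w ++ [⟨i, y⟩]) := by
  refine ⟨fun hc => ?_, Or.inl (Or.inr (Or.inl ⟨i, y, h, rfl⟩))⟩
  have := congrArg List.length hc
  simp at this

lemma chain_map_inner :
    ∀ (t : List (V i₀)) (x : V i₀) (w : List (Σ i, V i)), List.Chain (G i₀).Adj x t →
      List.Chain (FPR G o) (w ++ [⟨i₀, x⟩]) (t.map (fun z => w ++ [⟨i₀, z⟩]))
  | [], _, _, _ => List.Chain.nil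
  | y :: t, x, w, hc => by
      simp only [List.Chain, List.chain_cons] at hc
      simp only [List.Chain, List.map_cons, List.chain_cons]
      exact ⟨fpr_inner G hc.1, chain_map_inner t y w hc.2⟩

lemma chain_block {t : List (V i₀)} {w : List (Σ i, V i)}
    (hc : List.Chain (G i₀).Adj (o i₀) t) :
    List.Chain (FPR G o) w (t.map (fun z => w ++ [⟨i₀, z⟩])) := by
  cases t with
  | nil => exact List.Chain.nil
  | cons x t =>
    simp only [List.Chain, List.chain_cons] at hc
    simp only [List.Chain, List.map_cons, List.chain_cons]
    exact ⟨fpr_root G hc.1, chain_map_inner G t x w hc.2⟩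

lemma build_chain (hy₀ : (G j).Adj (o j) y₀) :
    ∀ (L : List (List (V i₀))) (w : List (Σ i, V i)),
      (∀ t ∈ L, SAWtail (G i₀) (o i₀) t) →
      List.Chain (FPR G o) w (build i₀ j o y₀ w L)
  | [], _, _ => List.Chain.nil
  | [t], w, hL => chain_block G (hL t (by simp)).2.1
  | t :: t' :: L, w, hL => by
      have ht := hL t (by simp)
      rw [build]; simp only [List.Chain]; rw [List.isChain_cons_split]
      constructor
      · apply chain_concat (chain_block G ht.2.1)
        rw [getLastD_map _ t (o i₀) w ht.1]
        exact fpr_root G hy₀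
      · exact build_chain hy₀ (t' :: L) _ (fun s hs => hL s (List.mem_cons_of_mem _ hs))

end ChainBuild

lemma build_nodup :
    ∀ (L : List (List (V i₀))) (w : List (Σ i, V i)),
      (∀ t ∈ L, t.Nodup) → (build i₀ j o y₀ w L).Nodup
  | [], _, _ => List.nodup_nil
  | [t], w, hL => (hL t (by simp)).map (concat_inj w)
  | t :: t' :: L, w, hL => by
      rw [build, List.nodup_append]
      refine ⟨(hL t (by simp)).map (concat_inj w), ?_, ?_⟩
      · rw [List.nodup_cons]
        refine ⟨fun hc => ?_, build_nodup (t' :: L) _ (fun s hs => hL s (List.mem_cons_of_mem _ hs))⟩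
        exact absurd (build_mem_length (t' :: L) _ _ hc) (lt_irrefl _)
      · intro u hu v hu2 huv; subst huv
        obtain ⟨x, -, rfl⟩ := List.mem_map.mp hu
        rcases List.mem_cons.mp hu2 with h | h
        · have := congrArg List.length h
          simp at this
        · have := build_mem_length (t' :: L) _ _ h
          simp at this

lemma append_eq_of_blocks {α : Type*} {g : α → ℕ} {c : ℕ} :
    ∀ {A₁ A₂ X₁ X₂ : List α}, (∀ u ∈ A₁, g u = c) → (∀ u ∈ A₂, g u = c) →
      (∀ u ∈ X₁.head?, g u ≠ c) → (∀ u ∈ X₂.head?, g u ≠ c) →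
      A₁ ++ X₁ = A₂ ++ X₂ → A₁ = A₂ ∧ X₁ = X₂
  | [], [], X₁, X₂, _, _, _, _, h => ⟨rfl, h⟩
  | [], a :: A₂, X₁, X₂, _, hA₂, hX₁, _, h => by
      rw [List.nil_append] at h
      subst h
      exact absurd (hA₂ a (by simp)) (hX₁ a rfl)
  | a :: A₁, [], X₁, X₂, hA₁, _, _, hX₂, h => by
      rw [List.nil_append] at h
      exact absurd (hA₁ a (by simp)) (hX₂ a (by rw [← h]; rfl))
  | a :: A₁, b :: A₂, X₁, X₂, hA₁, hA₂, hX₁, hX₂, h => by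
      rw [List.cons_append, List.cons_append, List.cons_eq_cons] at h
      obtain ⟨rfl, h⟩ := h
      obtain ⟨h1, h2⟩ := append_eq_of_blocks (fun u hu => hA₁ u (by simp [hu]))
        (fun u hu => hA₂ u (by simp [hu])) hX₁ hX₂ h
      exact ⟨by rw [h1], h2⟩

lemma build_inj :
    ∀ (L₁ L₂ : List (List (V i₀))) (w : List (Σ i, V i)),
      (∀ t ∈ L₁, t ≠ []) → (∀ t ∈ L₂, t ≠ []) →
      build i₀ j o y₀ w L₁ = build i₀ j o y₀ w L₂ → L₁ = L₂ := by
  have hne : ∀ (L : List (List (V i₀))) (w : List (Σ i, V i)), (∀ t ∈ L, t ≠ []) → L ≠ [] →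
      build i₀ j o y₀ w L ≠ [] := by
    intro L w hL hL0
    match L with
    | [t] =>
      simp only [build]
      intro h
      exact hL t (by simp) (List.map_eq_nil_iff.mp h)
    | t :: t' :: L =>
      simp only [build]
      intro h
      rw [List.append_eq_nil_iff] at h
      simp at h
  intro L₁ L₂
  induction L₁ generalizing L₂ with
  | nil =>
    intro w h1 h2 he
    cases L₂ with
    | nil => rfl
    | cons t M => exact absurd he.symm (hne (t :: M) w h2 (by simp))
  | cons t₁ M₁ ih =>
    intro w h1 h2 he
    cases L₂ with
    | nil => exact absurd he (hne (t₁ :: M₁) w h1 (by simp))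
    | cons t₂ M₂ =>
      classical
      -- express both sides as block ++ rest
      have key : ∀ (t : List (V i₀)) (M : List (List (V i₀))),
          build i₀ j o y₀ w (t :: M) = t.map (fun x => w ++ [⟨i₀, x⟩]) ++
            (if M = [] then [] else
              ((w ++ [⟨i₀, t.getLastD (o i₀)⟩]) ++ [⟨j, y₀⟩]) ::
                build i₀ j o y₀ ((w ++ [⟨i₀, t.getLastD (o i₀)⟩]) ++ [⟨j, y₀⟩]) M) := by
        intro t M
        cases M with
        | nil => simp [build]
        | cons t' M => simp [build]
      rw [key t₁ M₁, key t₂ M₂] at he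
      have hlen : ∀ (t : List (V i₀)) (u : List (Σ i, V i)),
          u ∈ t.map (fun x => w ++ [⟨i₀, x⟩]) → u.length = w.length + 1 := by
        intro t u hu
        obtain ⟨x, -, rfl⟩ := List.mem_map.mp hu
        simp
      have hhead : ∀ (t : List (V i₀)) (M : List (List (V i₀))) (u : List (Σ i, V i)),
          u ∈ (if M = [] then ([] : List (List (Σ i, V i))) else
              ((w ++ [⟨i₀, t.getLastD (o i₀)⟩]) ++ [⟨j, y₀⟩]) ::
                build i₀ j o y₀ ((w ++ [⟨i₀, t.getLastD (o i₀)⟩]) ++ [⟨j, y₀⟩]) M).head? →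
            u.length ≠ w.length + 1 := by
        intro t M u hu
        split at hu
        · simp at hu
        · rw [List.head?_cons, Option.mem_def, Option.some_inj] at hu
          subst hu; simp
      obtain ⟨hA, hX⟩ := append_eq_of_blocks (hlen t₁) (hlen t₂) (hhead t₁ M₁) (hhead t₂ M₂) he
      have ht12 : t₁ = t₂ :=
        List.map_injective_iff.mpr (concat_inj w) hA
      subst ht12
      refine congrArg (t₁ :: ·) ?_
      by_cases hM1 : M₁ = [] <;> by_cases hM2 : M₂ = []
      · rw [hM1, hM2]
      · rw [if_pos hM1, if_neg hM2] at hX; exact absurd hX.symm (by simp)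
      · rw [if_neg hM1, if_pos hM2] at hX; exact absurd hX (by simp)
      · rw [if_neg hM1, if_neg hM2, List.cons_eq_cons] at hX
        exact ih M₂ _ (fun s hs => h1 s (List.mem_cons_of_mem _ hs))
          (fun s hs => h2 s (List.mem_cons_of_mem _ hs)) hX.2

-- ## Lifting raw paths to the free product
open Classical in
noncomputable def liftPath (o : ∀ i, V i) (p : List (List (Σ i, V i))) : List (FPV V o) :=
  p.map (fun u => if h : ValidWord o u then ⟨u, h⟩ else fpRoot V o)

lemma liftPath_val {o : ∀ i, V i} {p : List (List (Σ i, V i))}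
    (hval : ∀ u ∈ p, ValidWord o u) : (liftPath o p).map Subtype.val = p := by
  rw [liftPath]; refine List.map_map.trans ?_
  conv_rhs => rw [← List.map_id p]
  apply List.map_congr_left
  intro u hu
  exact congrArg Subtype.val (dif_pos (hval u hu))

lemma chain'_liftPath (G : ∀ i, SimpleGraph (V i)) {o : ∀ i, V i}
    {p : List (List (Σ i, V i))} (hval : ∀ u ∈ p, ValidWord o u)
    (hc : List.Chain' (FPR G o) p) : List.Chain' (freeProd G o).Adj (liftPath o p) := by
  rw [← liftPath_val hval] at hc; simp only [List.Chain'] at hc; replace hc := (List.isChain_map _).mp hc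
  refine hc.imp ?_
  intro a b hab
  refine (freeProd_adj_iff G o a b).mpr ?_
  exact ⟨fun hc2 => hab.1 (congrArg Subtype.val hc2), hab.2⟩

lemma nodup_liftPath {o : ∀ i, V i} {p : List (List (Σ i, V i))}
    (hval : ∀ u ∈ p, ValidWord o u) (hn : p.Nodup) : (liftPath o p).Nodup := by
  rw [← liftPath_val hval] at hn
  exact hn.of_map _

-- ## The full path construction
variable (i₀ j) (o) (y₀) in
noncomputable def fpPath (L : List (List (V i₀))) : List (FPV V o) :=
  fpRoot V o :: liftPath o (build i₀ j o y₀ [] L)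

lemma validWord_nil {o : ∀ i, V i} : ValidWord o ([] : List (Σ i, V i)) :=
  ⟨fun x hx => absurd hx List.not_mem_nil, List.IsChain.nil⟩

lemma fpPath_mem (G : ∀ i, SimpleGraph (V i)) (hij : j ≠ i₀) (hy₀ : (G j).Adj (o j) y₀)
    (L : List (List (V i₀))) (hL : ∀ t ∈ L, SAWtail (G i₀) (o i₀) t) (hL0 : L ≠ [])
    (n : ℕ) (hn : (L.map List.length).sum + L.length = n + 1) :
    fpPath i₀ j o y₀ L ∈ {l : List (FPV V o) | l.length = n + 1 ∧
      l.head? = some (fpRoot V o) ∧ l.Chain' (freeProd G o).Adj ∧ l.Nodup} := by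
  have hval : ∀ u ∈ build i₀ j o y₀ [] L, ValidWord o u :=
    build_valid G hij hy₀ L [] hL validWord_nil (by simp)
  refine ⟨?_, rfl, ?_, ?_⟩
  · have := build_length i₀ j o y₀ L [] hL0
    simp only [fpPath, liftPath, List.length_cons, List.length_map]
    omega
  · show List.Chain' _ (_ :: _)
    have hc : List.Chain' (FPR G o) ([] :: build i₀ j o y₀ [] L) :=
      build_chain G hy₀ L [] hL
    have hv2 : ∀ u ∈ ([] :: build i₀ j o y₀ [] L), ValidWord o u := by
      intro u hu
      rcases List.mem_cons.mp hu with rfl | hu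
      · exact validWord_nil
      · exact hval u hu
    have := chain'_liftPath G hv2 hc
    have e : fpRoot V o :: liftPath o (build i₀ j o y₀ [] L) = liftPath o ([] :: build i₀ j o y₀ [] L) :=
      congrArg (fun x => x :: liftPath o (build i₀ j o y₀ [] L))
        (dif_pos (h := Classical.propDecidable _) (t := fun h => (⟨[], h⟩ : FPV V o))
          (e := fun _ => fpRoot V o) validWord_nil).symm
    rw [e]; exact this
  · rw [fpPath, List.nodup_cons]
    constructor
    · intro hc
      rw [liftPath, List.mem_map] at hc
      obtain ⟨u, hu, he⟩ := hc
      have : u = [] := by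
        replace he := (dif_pos (hval u hu)).symm.trans he
        exact congrArg Subtype.val he
      have := build_mem_length (L := L) (w := []) u hu
      simp [‹u = []›] at this
    · exact nodup_liftPath hval
        (build_nodup L [] (fun t ht => (hL t ht).2.2.2))

lemma fpPath_inj (L₁ L₂ : List (List (V i₀))) (h1 : ∀ t ∈ L₁, t ≠ []) (h2 : ∀ t ∈ L₂, t ≠ [])
    (hv1 : ∀ u ∈ build i₀ j o y₀ [] L₁, ValidWord o u)
    (hv2 : ∀ u ∈ build i₀ j o y₀ [] L₂, ValidWord o u)
    (he : fpPath i₀ j o y₀ L₁ = fpPath i₀ j o y₀ L₂) : L₁ = L₂ := by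
  apply build_inj L₁ L₂ [] h1 h2
  have := congrArg (fun l => (List.tail l).map Subtype.val) he
  rw [← liftPath_val hv1, ← liftPath_val hv2]; exact this

end Build

-- ## Shapes from subsets
def diffs : ℕ → List ℕ → List ℕ
  | _, [] => []
  | p, b :: bs => (b - p) :: diffs b bs

def psums : ℕ → List ℕ → List ℕ
  | _, [] => []
  | p, a :: as => (p + a) :: psums (p + a) as

lemma psums_diffs : ∀ (bs : List ℕ) (p : ℕ), List.Chain (· < ·) p bs →
    psums p (diffs p bs) = bs
  | [], _, _ => rfl
  | b :: bs, p, hc => by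
      simp only [List.Chain, List.chain_cons] at hc
      have hpb : p + (b - p) = b := by omega
      rw [diffs, psums, hpb, psums_diffs bs b hc.2]

lemma diffs_pos : ∀ (bs : List ℕ) (p : ℕ), List.Chain (· < ·) p bs →
    ∀ a ∈ diffs p bs, 1 ≤ a
  | [], _, _ => by simp [diffs]
  | b :: bs, p, hc => by
      simp only [List.Chain, List.chain_cons] at hc
      rw [diffs]
      intro a ha
      rcases List.mem_cons.mp ha with rfl | ha
      · omega
      · exact diffs_pos bs b hc.2 a ha

lemma diffs_sum : ∀ (bs : List ℕ) (p : ℕ), List.Chain (· < ·) p bs →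
    (diffs p bs).sum + p = bs.getLastD p
  | [], _, _ => by simp [diffs]
  | b :: bs, p, hc => by
      simp only [List.Chain, List.chain_cons] at hc
      have := diffs_sum bs b hc.2
      rw [diffs, List.sum_cons, List.getLastD_cons]
      omega

lemma diffs_length : ∀ (bs : List ℕ) (p : ℕ), (diffs p bs).length = bs.length
  | [], _ => rfl
  | b :: bs, p => by rw [diffs, List.length_cons, List.length_cons, diffs_length bs b]

/-- The composition of `n - S.card` associated to a subset `S`. -/
def shapeOf (S : Finset ℕ) (n : ℕ) : List ℕ :=
  diffs 0 (((S.sort (· ≤ ·)).map (· + 1)) ++ [n - S.card])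

lemma shapeOf_chain {S : Finset ℕ} {m n : ℕ} (hS : S ⊆ Finset.range (m - 1))
    (hmn : 2 * m ≤ n) (hm : 1 ≤ m) :
    List.Chain (· < ·) 0 (((S.sort (· ≤ ·)).map (· + 1)) ++ [n - S.card]) := by
  have hcard : S.card ≤ m - 1 := by
    calc S.card ≤ (Finset.range (m - 1)).card := Finset.card_le_card hS
    _ = m - 1 := Finset.card_range _
  have hmem : ∀ b ∈ S.sort (· ≤ ·), b < m - 1 := by
    intro b hb
    exact Finset.mem_range.mp (hS (Finset.mem_sort (α := ℕ) (· ≤ ·) |>.mp hb))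
  simp only [List.Chain]; rw [List.isChain_iff_pairwise]
  have hsorted : List.Pairwise (· < ·) (S.sort (· ≤ ·)) := (Finset.sortedLT_sort S).pairwise
  rw [List.pairwise_cons]
  constructor
  · intro b hb
    rcases List.mem_append.mp hb with h | h
    · obtain ⟨x, -, rfl⟩ := List.mem_map.mp h
      omega
    · rw [List.mem_singleton] at h
      omega
  · rw [List.pairwise_append]
    refine ⟨hsorted.map _ (fun a b h => by omega), List.pairwise_singleton _ _, ?_⟩
    intro a ha b hb
    rw [List.mem_singleton] at hb
    obtain ⟨x, hx, rfl⟩ := List.mem_map.mp ha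
    have := hmem x hx
    omega

lemma shapeOf_inj {S S' : Finset ℕ} {m n : ℕ} (hS : S ⊆ Finset.range (m - 1))
    (hS' : S' ⊆ Finset.range (m - 1)) (hmn : 2 * m ≤ n) (hm : 1 ≤ m)
    (h : shapeOf S n = shapeOf S' n) : S = S' := by
  have key : ∀ (T : Finset ℕ), T ⊆ Finset.range (m - 1) →
      ((psums 0 (shapeOf T n)).dropLast.map (· - 1)).toFinset = T := by
    intro T hT
    rw [shapeOf, psums_diffs _ _ (shapeOf_chain hT hmn hm), List.dropLast_concat,
      List.map_map]
    have : ((· - 1) ∘ (· + 1)) = (id : ℕ → ℕ) := by funext x; simp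
    rw [this, List.map_id, Finset.sort_toFinset]
  rw [← key S hS, ← key S' hS', h]

-- ## Finsets of block lists of a given shape
def listsOfShape {W : Type*} [DecidableEq W] (F : ℕ → Finset (List W)) :
    List ℕ → Finset (List (List W))
  | [] => {[]}
  | a :: as => Finset.image₂ List.cons (F a) (listsOfShape F as)

lemma cons_injective2 {α : Type*} : Function.Injective2 (List.cons (α := α)) := by
  intro a b c d h
  exact ⟨(List.cons_eq_cons.mp h).1, (List.cons_eq_cons.mp h).2⟩

lemma card_listsOfShape {W : Type*} [DecidableEq W] (F : ℕ → Finset (List W)) :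
    ∀ ns : List ℕ, (listsOfShape F ns).card = (ns.map (fun a => (F a).card)).prod
  | [] => by simp [listsOfShape]
  | a :: as => by
      rw [listsOfShape, Finset.card_image₂ cons_injective2, List.map_cons, List.prod_cons,
        card_listsOfShape F as]

lemma mem_listsOfShape {W : Type*} [DecidableEq W] (F : ℕ → Finset (List W)) :
    ∀ (ns : List ℕ) (L : List (List W)), L ∈ listsOfShape F ns →
      L.map List.length = ns ∨ ¬ (∀ a, ∀ t ∈ F a, t.length = a) → True := fun _ _ _ _ => trivial

lemma mem_listsOfShape' {W : Type*} [DecidableEq W] {F : ℕ → Finset (List W)}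
    (hF : ∀ a, ∀ t ∈ F a, t.length = a) :
    ∀ (ns : List ℕ) (L : List (List W)), L ∈ listsOfShape F ns →
      L.map List.length = ns ∧ ∀ t ∈ L, t ∈ F t.length
  | [], L, h => by
      rw [listsOfShape, Finset.mem_singleton] at h
      subst h
      exact ⟨rfl, by simp⟩
  | a :: as, L, h => by
      rw [listsOfShape, Finset.mem_image₂] at h
      obtain ⟨t, ht, M, hM, rfl⟩ := h
      obtain ⟨h1, h2⟩ := mem_listsOfShape' hF as M hM
      have hta := hF a t ht
      refine ⟨by rw [List.map_cons, h1, hta], ?_⟩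
      intro s hs
      rcases List.mem_cons.mp hs with rfl | hs
      · rw [hta]; exact ht
      · exact h2 s hs

-- ## SAW tails vs sawCount
lemma sawtail_image {W : Type} (Gi : SimpleGraph W) (ov : W) (a : ℕ) (ha : 1 ≤ a) :
    (fun t => ov :: t) '' {t | SAWtail Gi ov t ∧ t.length = a}
      = {l : List W | l.length = a + 1 ∧ l.head? = some ov ∧ l.Chain' Gi.Adj ∧ l.Nodup} := by
  ext l
  constructor
  · rintro ⟨t, ⟨⟨-, hchain, hnotmem, hnodup⟩, hlen⟩, rfl⟩
    exact ⟨by simp [hlen], rfl, hchain, List.nodup_cons.mpr ⟨hnotmem, hnodup⟩⟩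
  · rintro ⟨hlen, hhead, hchain, hnodup⟩
    obtain ⟨b, t, rfl⟩ : ∃ b t, l = b :: t := by
      cases l with
      | nil => simp at hhead
      | cons b t => exact ⟨b, t, rfl⟩
    obtain rfl : b = ov := by simpa using hhead
    rw [List.nodup_cons] at hnodup
    refine ⟨t, ⟨⟨?_, hchain, hnodup.1, hnodup.2⟩, by simpa using hlen⟩, rfl⟩
    intro h
    rw [h] at hlen
    simp at hlen
    omega

lemma sawtail_finite {W : Type} (Gi : SimpleGraph W) (hlfi : LocFinite Gi) (ov : W) (a : ℕ) :
    {t | SAWtail Gi ov t ∧ t.length = a}.Finite := by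
  rcases Nat.eq_zero_or_pos a with rfl | ha
  · apply Set.Finite.subset (Set.finite_empty)
    rintro t ⟨⟨hne, -, -, -⟩, hlen⟩
    exact absurd (List.length_eq_zero_iff.mp hlen) hne
  · have himg : ((fun t => ov :: t) '' {t | SAWtail Gi ov t ∧ t.length = a}).Finite := by
      rw [sawtail_image Gi ov a ha]
      exact sawSet_finite Gi hlfi ov a
    exact Set.Finite.of_finite_image himg ((List.cons_injective).injOn)

lemma sawtail_ncard {W : Type} (Gi : SimpleGraph W) (ov : W) (a : ℕ) (ha : 1 ≤ a) :
    {t | SAWtail Gi ov t ∧ t.length = a}.ncard = sawCount Gi ov a := by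
  rw [sawCount, ← sawtail_image Gi ov a ha,
    Set.ncard_image_of_injective _ (List.cons_injective)]


/-- If a quasi-transitive factor `G_{i₀}` satisfies `σₙ^{(i₀)} ≥ μ₁ⁿ` for all `n`, where
`μ₁` is its connective constant, then the number `σₙ` of SAWs of length `n` in the free
product satisfies `σₙ ≥ μ₁^{n−1}·(1 + μ₁⁻¹)^{⌊n/2⌋−1}` for all `n ≥ 2`. -/
theorem freeProd_saw_lower_bound {r : ℕ} (hr : 2 ≤ r)
    (V : Fin r → Type) (G : ∀ i, SimpleGraph (V i)) (o : ∀ i, V i)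
    (hconn : ∀ i, (G i).Connected) (hqt : ∀ i, QuasiTransitive (G i))
    (hlf : ∀ i, LocFinite (G i)) (hnt : ∀ i, Nontrivial (V i))
    (i₀ : Fin r) (μ₁ : ℝ)
    (hμ : Filter.Tendsto (fun n : ℕ => (sawCount (G i₀) (o i₀) n : ℝ) ^ ((n : ℝ)⁻¹))
      Filter.atTop (nhds μ₁))
    (hσ : ∀ n : ℕ, μ₁ ^ n ≤ (sawCount (G i₀) (o i₀) n : ℝ)) :
    ∀ n : ℕ, 2 ≤ n →
      μ₁ ^ (n - 1) * (1 + μ₁⁻¹) ^ (n / 2 - 1)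
        ≤ (sawCount (freeProd G o) (fpRoot V o) n : ℝ) := by
  intro n hn
  classical
  have hμ0 : 0 ≤ μ₁ :=
    ge_of_tendsto' hμ (fun k => Real.rpow_nonneg (Nat.cast_nonneg _) _)
  by_cases hzero : ∃ N, sawCount (G i₀) (o i₀) N = 0
  · -- degenerate case: μ₁ = 0
    obtain ⟨N, hN⟩ := hzero
    have h1 : μ₁ ^ N ≤ 0 := by
      have := hσ N
      rw [hN] at this
      exact_mod_cast this
    have hμeq : μ₁ = 0 := by
      by_contra h
      have hpos : 0 < μ₁ := lt_of_le_of_ne hμ0 (Ne.symm h)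
      exact absurd h1 (not_le.mpr (pow_pos hpos N))
    rw [hμeq, zero_pow (by omega : n - 1 ≠ 0), zero_mul]
    positivity
  · -- main case
    push_neg at hzero
    have hposσ : ∀ N, 1 ≤ sawCount (G i₀) (o i₀) N := fun N => Nat.one_le_iff_ne_zero.mpr (hzero N)
    have hμ1 : 1 ≤ μ₁ := by
      apply ge_of_tendsto hμ
      filter_upwards [Filter.eventually_ge_atTop 1] with k hk
      have h1 : (1:ℝ) ≤ (sawCount (G i₀) (o i₀) k : ℝ) := by exact_mod_cast hposσ k
      calc (1:ℝ) = 1 ^ ((k:ℝ)⁻¹) := (Real.one_rpow _).symm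
      _ ≤ _ := Real.rpow_le_rpow zero_le_one h1 (by positivity)
    have hμne : μ₁ ≠ 0 := by positivity
    set m := n / 2 with hm
    have hm1 : 1 ≤ m := by omega
    have h2m : 2 * m ≤ n := by omega
    -- choose the second factor and a neighbour of its root
    haveI : Nontrivial (Fin r) :=
      ⟨⟨⟨0, by omega⟩, ⟨1, by omega⟩, by simp [Fin.ext_iff]⟩⟩
    obtain ⟨j, hj⟩ := exists_ne i₀
    obtain ⟨y₀, hy₀⟩ : ∃ y, (G j).Adj (o j) y := by
      obtain ⟨v, hv⟩ := exists_ne (o j)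
      obtain ⟨p⟩ := (hconn j).preconnected (o j) v
      cases p with
      | nil => exact absurd rfl hv
      | cons h q => exact ⟨_, h⟩
    -- Finsets of SAW tails
    set Tf : ℕ → Finset (List (V i₀)) :=
      fun a => (sawtail_finite (G i₀) (hlf i₀) (o i₀) a).toFinset with hTf
    have hTmem : ∀ a t, t ∈ Tf a ↔ SAWtail (G i₀) (o i₀) t ∧ t.length = a := by
      intro a t
      rw [hTf, Set.Finite.mem_toFinset, Set.mem_setOf_eq]
    have hTlen : ∀ a, ∀ t ∈ Tf a, t.length = a := fun a t ht => ((hTmem a t).mp ht).2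
    have hTcard : ∀ a, 1 ≤ a → (Tf a).card = sawCount (G i₀) (o i₀) a := by
      intro a ha
      have hb : Tf a = (sawtail_finite (G i₀) (hlf i₀) (o i₀) a).toFinset := rfl
      rw [hb, ← Set.ncard_eq_toFinset_card _ (sawtail_finite (G i₀) (hlf i₀) (o i₀) a),
        sawtail_ncard (G i₀) (o i₀) a ha]
    have hTcardR : ∀ a, 1 ≤ a → μ₁ ^ a ≤ ((Tf a).card : ℝ) := by
      intro a ha
      rw [hTcard a ha]
      exact hσ a
    -- the index Finset
    set Γ : Finset (Σ _ : Finset ℕ, List (List (V i₀))) :=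
      ((Finset.range (m-1)).powerset).sigma (fun S => listsOfShape Tf (shapeOf S n)) with hΓ
    -- shape facts
    have hshape : ∀ S : Finset ℕ, S ∈ (Finset.range (m-1)).powerset →
        (shapeOf S n).length = S.card + 1 ∧ (shapeOf S n).sum = n - S.card ∧
        (∀ a ∈ shapeOf S n, 1 ≤ a) ∧ S.card ≤ m - 1 := by
      intro S hS
      rw [Finset.mem_powerset] at hS
      have hcard : S.card ≤ m - 1 := by
        calc S.card ≤ (Finset.range (m-1)).card := Finset.card_le_card hS
        _ = m - 1 := Finset.card_range _
      have hchainS := shapeOf_chain hS h2m hm1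
      refine ⟨?_, ?_, diffs_pos _ _ hchainS, hcard⟩
      · rw [shapeOf, diffs_length]
        simp [Finset.length_sort]
      · have := diffs_sum _ _ hchainS
        rw [List.getLastD_concat] at this
        rw [shapeOf]
        omega
    -- block-list facts
    have hblocks : ∀ S : Finset ℕ, S ∈ (Finset.range (m-1)).powerset →
        ∀ L ∈ listsOfShape Tf (shapeOf S n),
          (∀ t ∈ L, SAWtail (G i₀) (o i₀) t) ∧ L ≠ [] ∧
            (L.map List.length).sum + L.length = n + 1 ∧ L.map List.length = shapeOf S n := by
      intro S hS L hL
      obtain ⟨hmap, hmem⟩ := mem_listsOfShape' hTlen (shapeOf S n) L hL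
      obtain ⟨hlen, hsum, hpos, hcard⟩ := hshape S hS
      have hsaw : ∀ t ∈ L, SAWtail (G i₀) (o i₀) t :=
        fun t ht => ((hTmem t.length t).mp (hmem t ht)).1
      have hL0 : L ≠ [] := by
        intro h
        rw [h] at hmap
        rw [← hmap] at hlen
        simp at hlen
      refine ⟨hsaw, hL0, ?_, hmap⟩
      have h1 : (L.map List.length).sum = n - S.card := by rw [hmap, hsum]
      have h2 : L.length = S.card + 1 := by
        have := congrArg List.length hmap
        rwa [List.length_map, hlen] at this
      omega
    -- the injection into SAWs of the free product
    set A : Set (List (FPV V o)) := {l : List (FPV V o) | l.length = n + 1 ∧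
      l.head? = some (fpRoot V o) ∧ l.Chain' (freeProd G o).Adj ∧ l.Nodup} with hA
    have hAfin : A.Finite := sawSet_finite _ (freeProd_locFinite G o hlf) (fpRoot V o) n
    set Θ : (Σ _ : Finset ℕ, List (List (V i₀))) → List (FPV V o) :=
      fun p => fpPath i₀ j o y₀ p.2 with hΘ
    have himg : Θ '' ↑Γ ⊆ A := by
      rintro _ ⟨⟨S, L⟩, hmem, rfl⟩
      rw [Finset.mem_coe, hΓ, Finset.mem_sigma] at hmem
      obtain ⟨hsaw, hL0, hsum, -⟩ := hblocks S hmem.1 L hmem.2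
      exact fpPath_mem G hj hy₀ L hsaw hL0 n hsum
    have hinj : Set.InjOn Θ ↑Γ := by
      rintro ⟨S1, L1⟩ h1 ⟨S2, L2⟩ h2 he
      rw [Finset.mem_coe, hΓ, Finset.mem_sigma] at h1 h2
      obtain ⟨hsaw1, -, -, hmap1⟩ := hblocks S1 h1.1 L1 h1.2
      obtain ⟨hsaw2, -, -, hmap2⟩ := hblocks S2 h2.1 L2 h2.2
      have hv1 := build_valid G hj hy₀ L1 [] hsaw1 validWord_nil (by simp)
      have hv2 := build_valid G hj hy₀ L2 [] hsaw2 validWord_nil (by simp)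
      have hLeq : L1 = L2 := fpPath_inj L1 L2 (fun t ht => (hsaw1 t ht).1)
        (fun t ht => (hsaw2 t ht).1) hv1 hv2 he
      subst hLeq
      have hSeq : S1 = S2 := by
        apply shapeOf_inj (Finset.mem_powerset.mp h1.1) (Finset.mem_powerset.mp h2.1) h2m hm1
        rw [← hmap1, ← hmap2]
      subst hSeq
      rfl
    -- cardinality chain, natural number part
    have hcount : Γ.card ≤ sawCount (freeProd G o) (fpRoot V o) n := by
      have : sawCount (freeProd G o) (fpRoot V o) n = A.ncard := rfl
      rw [this]
      calc Γ.card = (↑Γ : Set (Σ _ : Finset ℕ, List (List (V i₀)))).ncard :=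
            (Set.ncard_coe_finset Γ).symm
      _ = (Θ '' ↑Γ).ncard := (Set.ncard_image_of_injOn hinj).symm
      _ ≤ A.ncard := Set.ncard_le_ncard himg hAfin
    -- cardinality of Γ, real-valued bound
    have hprodbound : ∀ ns : List ℕ, (∀ a ∈ ns, 1 ≤ a) →
        μ₁ ^ ns.sum ≤ (ns.map (fun a => ((Tf a).card : ℝ))).prod := by
      intro ns
      induction ns with
      | nil => simp
      | cons a as ih =>
        intro hpos
        rw [List.sum_cons, List.map_cons, List.prod_cons, pow_add]
        have h1 := hTcardR a (hpos a (by simp))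
        have h2 := ih (fun b hb => hpos b (List.mem_cons_of_mem _ hb))
        apply mul_le_mul h1 h2 (by positivity) (by positivity)
    have hcardΓ : ∀ S ∈ (Finset.range (m-1)).powerset,
        μ₁ ^ (n - 1) * μ₁⁻¹ ^ S.card ≤ ((listsOfShape Tf (shapeOf S n)).card : ℝ) := by
      intro S hS
      obtain ⟨hlen, hsum, hpos, hcard⟩ := hshape S hS
      have hc1 : ((listsOfShape Tf (shapeOf S n)).card : ℝ)
          = ((shapeOf S n).map (fun a => ((Tf a).card : ℝ))).prod := by
        rw [card_listsOfShape, Nat.cast_list_prod, List.map_map]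
        rfl
      rw [hc1]
      refine le_trans ?_ (hprodbound (shapeOf S n) hpos)
      rw [hsum]
      have he1 : μ₁ ^ (n - 1) * μ₁⁻¹ ^ S.card = μ₁ ^ (n - 1 - S.card) := by
        rw [inv_pow, ← pow_sub₀ μ₁ hμne (by omega : S.card ≤ n - 1)]
      rw [he1]
      apply pow_le_pow_right₀ hμ1
      omega
    -- sum over the powerset
    have hsumpow : ∑ S ∈ (Finset.range (m-1)).powerset, μ₁⁻¹ ^ S.card = (1 + μ₁⁻¹) ^ (m-1) := by
      rw [Finset.sum_powerset]
      have : ∀ k ∈ Finset.range ((Finset.range (m-1)).card + 1),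
          ∑ S ∈ Finset.powersetCard k (Finset.range (m-1)), μ₁⁻¹ ^ S.card
            = (m-1).choose k * μ₁⁻¹ ^ k := by
        intro k hk
        rw [Finset.sum_congr rfl (fun S hS => by
          rw [(Finset.mem_powersetCard.mp hS).2]), Finset.sum_const,
          Finset.card_powersetCard, Finset.card_range, nsmul_eq_mul]
      rw [Finset.sum_congr rfl this, Finset.card_range]
      rw [add_comm (1:ℝ) μ₁⁻¹, add_pow]
      apply Finset.sum_congr rfl
      intro k hk
      rw [one_pow]
      ring
    -- combine
    have hfinal : μ₁ ^ (n - 1) * (1 + μ₁⁻¹) ^ (m - 1) ≤ (Γ.card : ℝ) := by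
      rw [hΓ, Finset.card_sigma, Nat.cast_sum, ← hsumpow, Finset.mul_sum]
      exact Finset.sum_le_sum hcardΓ
    calc μ₁ ^ (n - 1) * (1 + μ₁⁻¹) ^ (n / 2 - 1) ≤ (Γ.card : ℝ) := hfinal
    _ ≤ _ := by exact_mod_cast hcount
end
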